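/- arXiv:1907.10972 — 3 statements merged into one kernel-verified Lean document; each statement's English description precedes it below -/
import Mathlib

section
/- Let G(λ) ∈ F(λ)^{p×m} have normal rank r and let g be any integer. If e₁ ≤ … ≤ e_r are the invariant orders of rev_g G(λ) at 0 and q₁ ≤ … ≤ q_r are the invariant orders of G(λ) at ∞, then e_i = q_i + g for every i = 1,…,r. -/
set_option synthInstance.maxHeartbeats 1000000
set_option maxHeartbeats 1000000

open Matrix

namespace RM

variable {F : Type*} [Field F]

/-- Evaluation of a rational function at a point, as numerator over denominator. -/
noncomputable def rEval (x : RatFunc F) (a : F) : F := x.num.eval a / x.denom.eval a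

/-- A rational function is defined (bounded) at a point of `F`, i.e. the denominator of its
reduced representation does not vanish there. -/
def RDefinedAt (x : RatFunc F) (a : F) : Prop := Polynomial.eval a x.denom ≠ 0

/-- The substitution `λ ↦ 1/λ` applied to a rational function. -/
noncomputable def rAtInv (x : RatFunc F) : RatFunc F :=
  Polynomial.eval₂ (algebraMap F (RatFunc F)) (RatFunc.X : RatFunc F)⁻¹ x.num /
    Polynomial.eval₂ (algebraMap F (RatFunc F)) (RatFunc.X : RatFunc F)⁻¹ x.denom

/-- The `g`-reversal `λ^g · x(1/λ)` of a rational function. -/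
noncomputable def rRev (g : ℤ) (x : RatFunc F) : RatFunc F :=
  (RatFunc.X : RatFunc F) ^ g * rAtInv x

/-- A rational function is proper. -/
def ProperR (x : RatFunc F) : Prop := x.num.degree ≤ x.denom.degree

/-- A rational function is strictly proper. -/
def StrictlyProperR (x : RatFunc F) : Prop := x.num.degree < x.denom.degree

section General

variable {ι κ : Type*} [Fintype ι] [Fintype κ] [DecidableEq ι] [DecidableEq κ]

/-- A rational matrix is defined (bounded) at a point of `F`. -/
def DefinedAt (R : Matrix ι κ (RatFunc F)) (a : F) : Prop := ∀ i j, RDefinedAt (R i j) a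

/-- Entrywise evaluation of a rational matrix at a point of `F`. -/
noncomputable def matEval (R : Matrix ι κ (RatFunc F)) (a : F) : Matrix ι κ F := fun i j =>
  rEval (R i j) a

/-- A square rational matrix is regular (invertible) at a point of `F`. -/
def RegularAt (R : Matrix ι ι (RatFunc F)) (a : F) : Prop :=
  DefinedAt R a ∧ IsUnit (matEval R a).det

/-- A square rational matrix is regular in a subset of `F`. -/
def RegularOn (R : Matrix ι ι (RatFunc F)) (S : Set F) : Prop := ∀ a ∈ S, RegularAt R a

/-- Two rational matrices of the same size are equivalent at a point of `F`. -/
def EquivAt (G H : Matrix ι κ (RatFunc F)) (a : F) : Prop :=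
  ∃ (R₁ : Matrix ι ι (RatFunc F)) (R₂ : Matrix κ κ (RatFunc F)),
    RegularAt R₁ a ∧ RegularAt R₂ a ∧ R₁ * G * R₂ = H

/-- Two rational matrices of the same size are equivalent in a subset of `F`. -/
def EquivOn (G H : Matrix ι κ (RatFunc F)) (S : Set F) : Prop :=
  ∃ (R₁ : Matrix ι ι (RatFunc F)) (R₂ : Matrix κ κ (RatFunc F)),
    RegularOn R₁ S ∧ RegularOn R₂ S ∧ R₁ * G * R₂ = H

/-- A rational matrix is proper. -/
def ProperM (R : Matrix ι κ (RatFunc F)) : Prop := ∀ i j, ProperR (R i j)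

/-- A square rational matrix is biproper: proper with a proper inverse. -/
def Biproper (R : Matrix ι ι (RatFunc F)) : Prop :=
  ProperM R ∧ ∃ S : Matrix ι ι (RatFunc F), ProperM S ∧ R * S = 1 ∧ S * R = 1

/-- Two rational matrices of the same size are equivalent at infinity
(via biproper matrices). -/
def EquivAtInf (G H : Matrix ι κ (RatFunc F)) : Prop :=
  ∃ (B₁ : Matrix ι ι (RatFunc F)) (B₂ : Matrix κ κ (RatFunc F)),
    Biproper B₁ ∧ Biproper B₂ ∧ B₁ * G * B₂ = H

/-- The `g`-reversal `λ^g · G(1/λ)` of a rational matrix. -/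
noncomputable def matRev (g : ℤ) (R : Matrix ι κ (RatFunc F)) : Matrix ι κ (RatFunc F) :=
  fun i j => rRev g (R i j)

/-- A polynomial matrix viewed as a rational matrix. -/
noncomputable def toRat (P : Matrix ι κ (Polynomial F)) : Matrix ι κ (RatFunc F) :=
  P.map (algebraMap (Polynomial F) (RatFunc F))

/-- The degree of a polynomial matrix: the maximum of the degrees of its entries. -/
noncomputable def matDeg (P : Matrix ι κ (Polynomial F)) : ℕ :=
  Finset.univ.sup fun p : ι × κ => (P p.1 p.2).natDegree

/-- The `d`-reversal `λ^d · P(1/λ)` of a polynomial matrix (entrywise reflection of the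
coefficients up to degree `d`).  For `d = matDeg P` this is the reversal `rev P`. -/
noncomputable def polyRev (d : ℕ) (P : Matrix ι κ (Polynomial F)) : Matrix ι κ (Polynomial F) :=
  fun i j => (P i j).reflect d

/-- Entrywise evaluation of a polynomial matrix at a point of `F`. -/
noncomputable def polyEval (P : Matrix ι κ (Polynomial F)) (a : F) : Matrix ι κ F :=
  fun i j => (P i j).eval a

/-- A rational matrix is a polynomial matrix. -/
def IsPolyM (R : Matrix ι κ (RatFunc F)) : Prop := ∀ i j, (R i j).denom = 1

/-- A rational matrix is a matrix pencil (a polynomial matrix of degree at most 1). -/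
def IsPencilM (R : Matrix ι κ (RatFunc F)) : Prop :=
  ∀ i j, (R i j).denom = 1 ∧ (R i j).num.degree ≤ 1

/-- A polynomial matrix is a matrix pencil (degree at most 1). -/
def IsPencilP (P : Matrix ι κ (Polynomial F)) : Prop := ∀ i j, (P i j).degree ≤ 1

/-- The matrix pencil `M1 · λ + M0` built from two constant matrices. -/
noncomputable def pencil (M1 M0 : Matrix ι κ F) : Matrix ι κ (Polynomial F) := fun i j =>
  Polynomial.C (M1 i j) * Polynomial.X + Polynomial.C (M0 i j)

/-- The polynomial part of a rational matrix (entrywise Euclidean quotient). -/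
noncomputable def polyPartM (G : Matrix ι κ (RatFunc F)) : Matrix ι κ (Polynomial F) :=
  fun i j => (G i j).num / (G i j).denom

/-- A rational matrix is strictly proper. -/
def StrictlyProperM (G : Matrix ι κ (RatFunc F)) : Prop := ∀ i j, StrictlyProperR (G i j)

open Classical in
/-- The grade used in the reversal `rev G` of a rational matrix: the degree of its polynomial
part if `G` is not strictly proper, and `0` otherwise. -/
noncomputable def revGrade (G : Matrix ι κ (RatFunc F)) : ℕ :=
  if StrictlyProperM G then 0 else matDeg (polyPartM G)

end General

/-- `(λ - a)^k`, for an integer `k`, as a rational function. -/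
noncomputable def localPow (a : F) (k : ℤ) : RatFunc F :=
  (algebraMap (Polynomial F) (RatFunc F) (Polynomial.X - Polynomial.C a)) ^ k

/-- The local Smith–McMillan diagonal form at `a` with invariant orders `ν`. -/
noncomputable def localDiag (p m : ℕ) (a : F) {r : ℕ} (ν : Fin r → ℤ) :
    Matrix (Fin p) (Fin m) (RatFunc F) := fun i j =>
  if h : (i : ℕ) = (j : ℕ) ∧ (j : ℕ) < r then localPow a (ν ⟨(j : ℕ), h.2⟩) else 0

/-- The Smith–McMillan diagonal form at infinity with invariant orders `μ`,
with diagonal entries `λ^(-μ i)`. -/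
noncomputable def infDiag (p m : ℕ) {r : ℕ} (μ : Fin r → ℤ) :
    Matrix (Fin p) (Fin m) (RatFunc F) := fun i j =>
  if h : (i : ℕ) = (j : ℕ) ∧ (j : ℕ) < r then (RatFunc.X : RatFunc F) ^ (-(μ ⟨(j : ℕ), h.2⟩))
  else 0

/-- `ν` is the (monotone) tuple of invariant orders of `G` at the point `a ∈ F`. -/
def IsInvOrdersAt {p m : ℕ} (G : Matrix (Fin p) (Fin m) (RatFunc F)) (a : F) {r : ℕ}
    (ν : Fin r → ℤ) : Prop :=
  r = G.rank ∧ Monotone ν ∧ EquivAt G (localDiag p m a ν) a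

/-- `μ` is the (monotone) tuple of invariant orders of `G` at infinity. -/
def IsInvOrdersAtInf {p m : ℕ} (G : Matrix (Fin p) (Fin m) (RatFunc F)) {r : ℕ}
    (μ : Fin r → ℤ) : Prop :=
  r = G.rank ∧ Monotone μ ∧ EquivAtInf G (infDiag p m μ)

/-- The multiset of values of a tuple of invariant orders. -/
def ordMS {r : ℕ} (ν : Fin r → ℤ) : Multiset ℤ := Multiset.map ν Finset.univ.val

/-- The multiset of pole partial multiplicities (exponents of the pole elementary divisors):
the negatives of the negative invariant orders. -/
def poleMS {r : ℕ} (ν : Fin r → ℤ) : Multiset ℤ :=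
  Multiset.map (fun x => -x) ((ordMS ν).filter fun x => x < 0)

/-- The multiset of zero partial multiplicities (exponents of the zero elementary divisors):
the positive invariant orders. -/
def zeroMS {r : ℕ} (ν : Fin r → ℤ) : Multiset ℤ := (ordMS ν).filter fun x => 0 < x

/-- `E` is the multiset of partial multiplicities (exponents of the elementary divisors) of the
polynomial matrix `P` at `a`. -/
def IsElemDivExps {p m : ℕ} (P : Matrix (Fin p) (Fin m) (Polynomial F)) (a : F)
    (E : Multiset ℤ) : Prop :=
  ∃ (s : ℕ) (μ : Fin s → ℤ), IsInvOrdersAt (toRat P) a μ ∧ E = zeroMS μ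

/-- The polynomial system matrix `[[A, B], [-C, D]]`. -/
noncomputable def sysMat {n q r : ℕ} (A : Matrix (Fin n) (Fin n) (Polynomial F))
    (B : Matrix (Fin n) (Fin r) (Polynomial F)) (C : Matrix (Fin q) (Fin n) (Polynomial F))
    (D : Matrix (Fin q) (Fin r) (Polynomial F)) :
    Matrix (Fin (n + q)) (Fin (n + r)) (Polynomial F) :=
  Matrix.reindex finSumFinEquiv finSumFinEquiv (Matrix.fromBlocks A B (-C) D)

/-- The transfer function matrix `D + C A⁻¹ B` of the polynomial system matrix
`[[A, B], [-C, D]]`. -/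
noncomputable def transferFn {n q r : ℕ} (A : Matrix (Fin n) (Fin n) (Polynomial F))
    (B : Matrix (Fin n) (Fin r) (Polynomial F)) (C : Matrix (Fin q) (Fin n) (Polynomial F))
    (D : Matrix (Fin q) (Fin r) (Polynomial F)) : Matrix (Fin q) (Fin r) (RatFunc F) :=
  toRat D + toRat C * (toRat A)⁻¹ * toRat B

/-- The polynomial system matrix with blocks `A, B, C` is minimal at `a ∈ F`:
`[A(a); C(a)]` and `[A(a) B(a)]` both have rank `n`. -/
def MinimalAt {n q r : ℕ} (A : Matrix (Fin n) (Fin n) (Polynomial F))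
    (B : Matrix (Fin n) (Fin r) (Polynomial F)) (C : Matrix (Fin q) (Fin n) (Polynomial F))
    (a : F) : Prop :=
  (Matrix.fromRows (polyEval A a) (polyEval C a)).rank = n ∧
    (Matrix.fromCols (polyEval A a) (polyEval B a)).rank = n

/-- The polynomial system matrix with blocks `A, B, C` is minimal in a subset of `F`. -/
def MinimalOn {n q r : ℕ} (A : Matrix (Fin n) (Fin n) (Polynomial F))
    (B : Matrix (Fin n) (Fin r) (Polynomial F)) (C : Matrix (Fin q) (Fin n) (Polynomial F))
    (S : Set F) : Prop := ∀ a ∈ S, MinimalAt A B C a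

/-- `diag(G, I_s)`. -/
noncomputable def diagPad {p m : ℕ} (G : Matrix (Fin p) (Fin m) (RatFunc F)) (s : ℕ) :
    Matrix (Fin (p + s)) (Fin (m + s)) (RatFunc F) :=
  Matrix.reindex finSumFinEquiv finSumFinEquiv
    (Matrix.fromBlocks G 0 0 (1 : Matrix (Fin s) (Fin s) (RatFunc F)))

/-- The polynomial system matrix `[[A, B], [-C, D]]` (of size `(n+q) × (n+r)`, with state
matrix `A`) is a (local) linearization of the rational matrix `G` (of size `p × m`)
at the point `a ∈ F`. -/
def IsLinearizationAt {n q r p m : ℕ} (A : Matrix (Fin n) (Fin n) (Polynomial F))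
    (B : Matrix (Fin n) (Fin r) (Polynomial F)) (C : Matrix (Fin q) (Fin n) (Polynomial F))
    (D : Matrix (Fin q) (Fin r) (Polynomial F)) (G : Matrix (Fin p) (Fin m) (RatFunc F))
    (a : F) : Prop :=
  MinimalAt A B C a ∧
    ∃ (s₁ s₂ : ℕ) (h₁ : p + s₁ = q + s₂) (h₂ : m + s₁ = r + s₂),
      ∃ (R₁ : Matrix (Fin (q + s₂)) (Fin (q + s₂)) (RatFunc F))
        (R₂ : Matrix (Fin (r + s₂)) (Fin (r + s₂)) (RatFunc F)),
        RegularAt R₁ a ∧ RegularAt R₂ a ∧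
          R₁ * Matrix.reindex (finCongr h₁) (finCongr h₂) (diagPad G s₁) * R₂ =
            diagPad (transferFn A B C D) s₂

/-- Linearization in a subset of `F`: linearization at every point of the subset. -/
def IsLinearizationOn {n q r p m : ℕ} (A : Matrix (Fin n) (Fin n) (Polynomial F))
    (B : Matrix (Fin n) (Fin r) (Polynomial F)) (C : Matrix (Fin q) (Fin n) (Polynomial F))
    (D : Matrix (Fin q) (Fin r) (Polynomial F)) (G : Matrix (Fin p) (Fin m) (RatFunc F))
    (S : Set F) : Prop :=
  ∀ a ∈ S, IsLinearizationAt A B C D G a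

/-- The polynomial system matrix `L = [[A, B], [-C, D]]` is a linearization of the rational
matrix `G` at infinity of grade `g`:  `rev L` is minimal at `0` and
`diag(rev_g G, I_{s₁})` is equivalent at `0` to `diag(rev_ℓ Ĝ, I_{s₂})`, where
`ℓ = deg L` and `Ĝ` is the transfer function matrix of `L`. -/
def IsLinearizationAtInf {n q r p m : ℕ} (A : Matrix (Fin n) (Fin n) (Polynomial F))
    (B : Matrix (Fin n) (Fin r) (Polynomial F)) (C : Matrix (Fin q) (Fin n) (Polynomial F))
    (D : Matrix (Fin q) (Fin r) (Polynomial F)) (G : Matrix (Fin p) (Fin m) (RatFunc F))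
    (g : ℤ) : Prop :=
  MinimalAt (polyRev (matDeg (sysMat A B C D)) A) (polyRev (matDeg (sysMat A B C D)) B)
      (polyRev (matDeg (sysMat A B C D)) C) (0 : F) ∧
    ∃ (s₁ s₂ : ℕ) (h₁ : p + s₁ = q + s₂) (h₂ : m + s₁ = r + s₂),
      ∃ (Q₁ : Matrix (Fin (q + s₂)) (Fin (q + s₂)) (RatFunc F))
        (Q₂ : Matrix (Fin (r + s₂)) (Fin (r + s₂)) (RatFunc F)),
        RegularAt Q₁ 0 ∧ RegularAt Q₂ 0 ∧
          Q₁ * Matrix.reindex (finCongr h₁) (finCongr h₂) (diagPad (matRev g G) s₁) * Q₂ =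
            diagPad (matRev ((matDeg (sysMat A B C D) : ℕ) : ℤ) (transferFn A B C D)) s₂

/-- `g`-strong linearization: a linearization in `F` which is also a linearization at
infinity of grade `g`. -/
def IsStrongLinearization {n q r p m : ℕ} (A : Matrix (Fin n) (Fin n) (Polynomial F))
    (B : Matrix (Fin n) (Fin r) (Polynomial F)) (C : Matrix (Fin q) (Fin n) (Polynomial F))
    (D : Matrix (Fin q) (Fin r) (Polynomial F)) (G : Matrix (Fin p) (Fin m) (RatFunc F))
    (g : ℤ) : Prop :=
  IsLinearizationOn A B C D G Set.univ ∧ IsLinearizationAtInf A B C D G g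

/-- A rational matrix has full row rank at `a ∈ F`. -/
def FullRowRankAt {p m : ℕ} (R : Matrix (Fin p) (Fin m) (RatFunc F)) (a : F) : Prop :=
  DefinedAt R a ∧ (matEval R a).rank = p

/-- A rational matrix has full row rank in a subset of `F`. -/
def FullRowRankOn {p m : ℕ} (R : Matrix (Fin p) (Fin m) (RatFunc F)) (S : Set F) : Prop :=
  ∀ a ∈ S, FullRowRankAt R a

/-- The `i`-th row degree of a polynomial matrix. -/
noncomputable def rowDegM {p m : ℕ} (K : Matrix (Fin p) (Fin m) (Polynomial F)) (i : Fin p) :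
    ℕ := Finset.univ.sup fun j => (K i j).natDegree

/-- The highest row degree coefficient matrix of a polynomial matrix. -/
noncomputable def hrdMat {p m : ℕ} (K : Matrix (Fin p) (Fin m) (Polynomial F)) :
    Matrix (Fin p) (Fin m) F := fun i j => (K i j).coeff (rowDegM K i)

/-- A polynomial matrix is a minimal basis: full row rank at every point of `F` and
row reduced. -/
def IsMinimalBasis {p m : ℕ} (K : Matrix (Fin p) (Fin m) (Polynomial F)) : Prop :=
  (∀ a : F, (polyEval K a).rank = p) ∧ (hrdMat K).rank = p

end RM

namespace RMAux

set_option linter.unusedSectionVars false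

open RM Polynomial

variable {F : Type*} [Field F]

local notation "K" => RatFunc F
local notation "PS" => PowerSeries F

/-! ### The subring of rational functions defined at `0` -/

lemma eval0_ne_of_dvd {a b : Polynomial F} (h : a ∣ b) (hb : b.eval 0 ≠ 0) :
    a.eval 0 ≠ 0 := by
  obtain ⟨c, rfl⟩ := h
  intro h0
  apply hb
  simp [h0]

lemma rdef_zero : RDefinedAt (0 : K) 0 := by
  simp [RDefinedAt, RatFunc.denom_zero]

lemma rdef_one : RDefinedAt (1 : K) 0 := by
  simp [RDefinedAt, RatFunc.denom_one]

lemma rdef_algebraMap (p : Polynomial F) :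
    RDefinedAt (algebraMap (Polynomial F) K p) 0 := by
  simp [RDefinedAt, RatFunc.denom_algebraMap]

/-- The subring of rational functions defined at `0`. -/
noncomputable def D0 (F : Type*) [Field F] : Subring (RatFunc F) where
  carrier := {x | RDefinedAt x 0}
  one_mem' := rdef_one
  zero_mem' := rdef_zero
  mul_mem' := by
    intro a b ha hb
    exact eval0_ne_of_dvd (RatFunc.denom_mul_dvd a b)
      (by rw [Polynomial.eval_mul]; exact mul_ne_zero ha hb)
  add_mem' := by
    intro a b ha hb
    exact eval0_ne_of_dvd (RatFunc.denom_add_dvd a b)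
      (by rw [Polynomial.eval_mul]; exact mul_ne_zero ha hb)
  neg_mem' := by
    intro a ha
    have : (-a) = (algebraMap (Polynomial F) (RatFunc F) (-1)) * a := by
      simp
    rw [Set.mem_setOf_eq, this]
    exact eval0_ne_of_dvd (RatFunc.denom_mul_dvd _ a)
      (by rw [Polynomial.eval_mul, RatFunc.denom_algebraMap]; simpa [RDefinedAt] using ha)

lemma mem_D0 {x : K} : x ∈ D0 F ↔ RDefinedAt x 0 := Iff.rfl

/-- Polynomials into power series. -/
noncomputable def PC : Polynomial F →+* PowerSeries F := Polynomial.coeToPowerSeries.ringHom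

lemma constantCoeff_PC (p : Polynomial F) :
    PowerSeries.constantCoeff (R := F) (PC p) = p.eval 0 := by
  rw [← PowerSeries.coeff_zero_eq_constantCoeff]
  simp [PC, Polynomial.coeff_coe, Polynomial.coeff_zero_eq_eval_zero]

lemma isUnit_PC_denom {x : K} (h : RDefinedAt x 0) : IsUnit (PC x.denom) := by
  rw [PowerSeries.isUnit_iff_constantCoeff, constantCoeff_PC]
  exact isUnit_iff_ne_zero.mpr h

lemma am_num (z : K) :
    algebraMap (Polynomial F) K z.num = z * algebraMap (Polynomial F) K z.denom := by
  have h := RatFunc.num_div_denom z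
  rwa [div_eq_iff (RatFunc.algebraMap_ne_zero (RatFunc.denom_ne_zero z))] at h

lemma num_denom_mul (x y : K) :
    (x * y).num * (x.denom * y.denom) = (x.num * y.num) * (x * y).denom := by
  apply IsFractionRing.injective (Polynomial F) K
  simp only [_root_.map_mul, am_num]
  ring

lemma num_denom_add (x y : K) :
    (x + y).num * (x.denom * y.denom)
      = (x.num * y.denom + y.num * x.denom) * (x + y).denom := by
  apply IsFractionRing.injective (Polynomial F) K
  simp only [_root_.map_mul, _root_.map_add, am_num]
  ring

/-- The power-series expansion of a rational function defined at `0`, as a ring hom on `D0`. -/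
noncomputable def psi : D0 F →+* PowerSeries F where
  toFun x := PC (x : K).num * Ring.inverse (PC (x : K).denom)
  map_one' := by
    simp [RatFunc.num_one, RatFunc.denom_one]
  map_zero' := by
    simp [RatFunc.num_zero]
  map_mul' x y := by
    have hx : RDefinedAt (x : K) 0 := x.2
    have hy : RDefinedAt (y : K) 0 := y.2
    have hxy : RDefinedAt ((x : K) * (y : K)) 0 := mul_mem x.2 y.2
    have ux := isUnit_PC_denom hx
    have uy := isUnit_PC_denom hy
    have uxy := isUnit_PC_denom hxy
    have hco : ((x * y : D0 F) : K) = (x : K) * (y : K) := rfl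
    simp only [hco]
    set Nx := PC (x : K).num; set Dx := PC (x : K).denom
    set Ny := PC (y : K).num; set Dy := PC (y : K).denom
    set Nxy := PC ((x : K) * (y : K)).num; set Dxy := PC ((x : K) * (y : K)).denom
    have key : Nxy * (Dx * Dy) = (Nx * Ny) * Dxy := by
      simp only [Nxy, Dx, Dy, Nx, Ny, Dxy, ← _root_.map_mul]
      exact congrArg PC (num_denom_mul (x : K) (y : K))
    have hu : IsUnit (Dx * (Dy * Dxy)) := ux.mul (uy.mul uxy)
    apply hu.mul_left_cancel
    have e1 : Dx * (Dy * Dxy) * (Nxy * Ring.inverse Dxy) = Nxy * (Dx * Dy) := by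
      rw [show Dx * (Dy * Dxy) * (Nxy * Ring.inverse Dxy)
            = (Dxy * Ring.inverse Dxy) * (Nxy * (Dx * Dy)) from by ring,
        Ring.mul_inverse_cancel _ uxy, one_mul]
    have e2 : Dx * (Dy * Dxy) * (Nx * Ring.inverse Dx * (Ny * Ring.inverse Dy))
        = (Nx * Ny) * Dxy := by
      rw [show Dx * (Dy * Dxy) * (Nx * Ring.inverse Dx * (Ny * Ring.inverse Dy))
            = (Dx * Ring.inverse Dx) * ((Dy * Ring.inverse Dy) * ((Nx * Ny) * Dxy)) from by ring,
        Ring.mul_inverse_cancel _ ux, Ring.mul_inverse_cancel _ uy, one_mul, one_mul]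
    rw [e1, e2, key]
  map_add' x y := by
    have hx : RDefinedAt (x : K) 0 := x.2
    have hy : RDefinedAt (y : K) 0 := y.2
    have hxy : RDefinedAt ((x : K) + (y : K)) 0 := add_mem x.2 y.2
    have ux := isUnit_PC_denom hx
    have uy := isUnit_PC_denom hy
    have uxy := isUnit_PC_denom hxy
    have hco : ((x + y : D0 F) : K) = (x : K) + (y : K) := rfl
    simp only [hco]
    set Nx := PC (x : K).num; set Dx := PC (x : K).denom
    set Ny := PC (y : K).num; set Dy := PC (y : K).denom
    set Nxy := PC ((x : K) + (y : K)).num; set Dxy := PC ((x : K) + (y : K)).denom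
    have key : Nxy * (Dx * Dy) = (Nx * Dy + Ny * Dx) * Dxy := by
      simp only [Nxy, Dx, Dy, Nx, Ny, Dxy, ← _root_.map_mul, ← _root_.map_add]
      exact congrArg PC (num_denom_add (x : K) (y : K))
    have hu : IsUnit (Dx * (Dy * Dxy)) := ux.mul (uy.mul uxy)
    apply hu.mul_left_cancel
    have e1 : Dx * (Dy * Dxy) * (Nxy * Ring.inverse Dxy) = Nxy * (Dx * Dy) := by
      rw [show Dx * (Dy * Dxy) * (Nxy * Ring.inverse Dxy)
            = (Dxy * Ring.inverse Dxy) * (Nxy * (Dx * Dy)) from by ring,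
        Ring.mul_inverse_cancel _ uxy, one_mul]
    have e2 : Dx * (Dy * Dxy) * (Nx * Ring.inverse Dx + Ny * Ring.inverse Dy)
        = (Nx * Dy + Ny * Dx) * Dxy := by
      rw [mul_add,
        show Dx * (Dy * Dxy) * (Nx * Ring.inverse Dx)
            = (Dx * Ring.inverse Dx) * (Nx * Dy * Dxy) from by ring,
        show Dx * (Dy * Dxy) * (Ny * Ring.inverse Dy)
            = (Dy * Ring.inverse Dy) * (Ny * Dx * Dxy) from by ring,
        Ring.mul_inverse_cancel _ ux, Ring.mul_inverse_cancel _ uy, one_mul, one_mul, add_mul]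
    rw [e1, e2, key]

/-- Evaluation at `0` as a ring hom on `D0`. -/
noncomputable def ev : D0 F →+* F := (PowerSeries.constantCoeff (R := F)).comp psi

lemma rEval_eq_ev (x : D0 F) : rEval (x : K) 0 = ev x := by
  have hx : RDefinedAt (x : K) 0 := x.2
  have ux := isUnit_PC_denom hx
  have hinv : PowerSeries.constantCoeff (R := F) (Ring.inverse (PC (x : K).denom))
      = ((x : K).denom.eval 0)⁻¹ := by
    have h1 : PowerSeries.constantCoeff (R := F) (Ring.inverse (PC (x : K).denom))
        * PowerSeries.constantCoeff (R := F) (PC (x : K).denom) = 1 := by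
      rw [← _root_.map_mul, Ring.inverse_mul_cancel _ ux, _root_.map_one]
    rw [constantCoeff_PC] at h1
    exact eq_inv_of_mul_eq_one_right (by rwa [mul_comm] at h1)
  simp only [ev, RingHom.comp_apply, psi, RingHom.coe_mk, MonoidHom.coe_mk, OneHom.coe_mk,
    _root_.map_mul, constantCoeff_PC, hinv, rEval]
  rw [div_eq_mul_inv]

lemma psi_algebraMap (p : Polynomial F) (h : (algebraMap (Polynomial F) K p) ∈ D0 F) :
    psi (⟨algebraMap (Polynomial F) K p, h⟩ : D0 F) = PC p := by
  simp only [psi, RingHom.coe_mk, MonoidHom.coe_mk, OneHom.coe_mk]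
  rw [RatFunc.num_algebraMap, RatFunc.denom_algebraMap, _root_.map_one, Ring.inverse_one, mul_one]

/-! ### Matrix-level infrastructure -/

section Matrices

variable {ι κ ρ : Type*} [Fintype ι] [Fintype κ] [Fintype ρ]
variable [DecidableEq ι] [DecidableEq κ] [DecidableEq ρ]

lemma definedAt_mul {M : Matrix ι κ K} {N : Matrix κ ρ K}
    (hM : DefinedAt M 0) (hN : DefinedAt N 0) : DefinedAt (M * N) 0 := by
  intro i j
  have : (M * N) i j ∈ D0 F := by
    rw [Matrix.mul_apply]
    exact sum_mem fun k _ => mul_mem (hM i k) (hN k j)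
  exact this

/-- Lift of a defined matrix to `D0`. -/
noncomputable def liftD (M : Matrix ι κ K) (h : DefinedAt M 0) : Matrix ι κ (D0 F) :=
  fun i j => ⟨M i j, h i j⟩

lemma liftD_mul {M : Matrix ι κ K} {N : Matrix κ ρ K} (hM : DefinedAt M 0)
    (hN : DefinedAt N 0) (hMN : DefinedAt (M * N) 0) :
    liftD (M * N) hMN = liftD M hM * liftD N hN := by
  ext i j
  simp [liftD, Matrix.mul_apply]

lemma definedAt_one : DefinedAt (1 : Matrix ι ι K) 0 := by
  intro i j
  by_cases h : i = j
  · simpa [Matrix.one_apply, h] using rdef_one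
  · simpa [Matrix.one_apply, h] using rdef_zero

/-- Power series expansion of a defined matrix. -/
noncomputable def matPS (M : Matrix ι κ K) (h : DefinedAt M 0) : Matrix ι κ PS :=
  (liftD M h).map psi

lemma matPS_congr {M N : Matrix ι κ K} (h : M = N) (hM : DefinedAt M 0)
    (hN : DefinedAt N 0) : matPS M hM = matPS N hN := by
  subst h; rfl

lemma matPS_mul {M : Matrix ι κ K} {N : Matrix κ ρ K} (hM : DefinedAt M 0)
    (hN : DefinedAt N 0) (hMN : DefinedAt (M * N) 0) :
    matPS (M * N) hMN = matPS M hM * matPS N hN := by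
  unfold matPS
  rw [liftD_mul hM hN hMN, Matrix.map_mul]

lemma matPS_one : matPS (1 : Matrix ι ι K) definedAt_one = 1 := by
  unfold matPS
  have h1 : liftD (1 : Matrix ι ι K) definedAt_one = 1 := by
    ext i j
    by_cases h : i = j <;> simp [liftD, Matrix.one_apply, h]
  rw [h1, Matrix.map_one _ (map_zero psi) (_root_.map_one psi)]

lemma matEval_eq (M : Matrix ι κ K) (h : DefinedAt M 0) :
    matEval M 0 = (matPS M h).map (PowerSeries.constantCoeff (R := F)) := by
  ext i j
  show rEval (M i j) 0 = _
  rw [show ((matPS M h).map (PowerSeries.constantCoeff (R := F))) i j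
      = PowerSeries.constantCoeff (R := F) (psi ⟨M i j, h i j⟩) from rfl]
  exact rEval_eq_ev ⟨M i j, h i j⟩

lemma matEval_mul {M : Matrix ι κ K} {N : Matrix κ ρ K} (hM : DefinedAt M 0)
    (hN : DefinedAt N 0) :
    matEval (M * N) 0 = matEval M 0 * matEval N 0 := by
  rw [matEval_eq (M * N) (definedAt_mul hM hN), matPS_mul hM hN _, Matrix.map_mul,
    ← matEval_eq M hM, ← matEval_eq N hN]

lemma matEval_one : matEval (1 : Matrix ι ι K) 0 = 1 := by
  rw [matEval_eq _ definedAt_one, matPS_one,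
    Matrix.map_one _ (map_zero _) (_root_.map_one _)]

lemma regularAt_mul {R S : Matrix ι ι K} (hR : RegularAt R 0) (hS : RegularAt S 0) :
    RegularAt (R * S) 0 := by
  refine ⟨definedAt_mul hR.1 hS.1, ?_⟩
  rw [matEval_mul hR.1 hS.1, Matrix.det_mul]
  exact hR.2.mul hS.2

lemma det_liftD (R : Matrix ι ι K) (h : DefinedAt R 0) :
    (((liftD R h).det : D0 F) : K) = R.det := by
  have h2 : ((D0 F).subtype).mapMatrix (liftD R h) = R := by
    ext i j; simp [liftD]
  have h3 := RingHom.map_det ((D0 F).subtype) (liftD R h)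
  rw [h2] at h3
  exact h3

lemma rEval_det (R : Matrix ι ι K) (h : DefinedAt R 0) :
    rEval R.det 0 = (matEval R 0).det := by
  rw [← det_liftD R h, rEval_eq_ev]
  have h1 : matEval R 0 = (RingHom.mapMatrix (ev (F := F))) (liftD R h) := by
    ext i j
    exact rEval_eq_ev ⟨R i j, h i j⟩
  rw [h1, ← RingHom.map_det]

lemma rEval_zero' : rEval (0 : K) 0 = 0 := by
  simp [rEval, RatFunc.num_zero]

lemma rdef_inv {x : K} (h : RDefinedAt x 0) (h0 : rEval x 0 ≠ 0) :
    RDefinedAt x⁻¹ 0 := by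
  have hx : x ≠ 0 := by rintro rfl; exact h0 rEval_zero'
  have hnum0 : x.num.eval 0 ≠ 0 := by
    intro hn; apply h0; simp [rEval, hn]
  have hinv : x⁻¹ = algebraMap (Polynomial F) K x.denom / algebraMap (Polynomial F) K x.num := by
    conv_lhs => rw [← RatFunc.num_div_denom x]
    rw [inv_div]
  have hdvd : (x⁻¹).denom ∣ x.num := by
    rw [RatFunc.denom_dvd (RatFunc.num_ne_zero hx)]
    exact ⟨x.denom, hinv⟩
  exact eval0_ne_of_dvd hdvd hnum0

lemma regularAt_det_ne_zero {R : Matrix ι ι K} (h : RegularAt R 0) : R.det ≠ 0 := by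
  intro h0
  have h1 := rEval_det R h.1
  rw [h0, rEval_zero'] at h1
  exact (isUnit_iff_ne_zero.mp h.2) h1.symm

lemma regularAt_inv {R : Matrix ι ι K} (h : RegularAt R 0) : RegularAt R⁻¹ 0 := by
  have hdet : R.det ≠ 0 := regularAt_det_ne_zero h
  have hUdet : IsUnit R.det := isUnit_iff_ne_zero.mpr hdet
  have hdetmem : R.det ∈ D0 F := by
    rw [← det_liftD R h.1]; exact SetLike.coe_mem _
  have hdetev : rEval R.det 0 ≠ 0 := by
    rw [rEval_det R h.1]; exact IsUnit.ne_zero h.2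
  have hdef : DefinedAt R⁻¹ 0 := by
    intro i j
    have hadj : R.adjugate i j ∈ D0 F := by
      have h2 : ((D0 F).subtype).mapMatrix (liftD R h.1) = R := by
        ext a b; simp [liftD]
      have h3 := RingHom.map_adjugate ((D0 F).subtype) (liftD R h.1)
      rw [h2] at h3
      have h4 : R.adjugate i j = (((liftD R h.1).adjugate i j : D0 F) : K) := by
        rw [← h3]; rfl
      rw [h4]; exact SetLike.coe_mem _
    have h5 : R⁻¹ i j = (R.det)⁻¹ * R.adjugate i j := by
      rw [Matrix.inv_def]
      simp [Ring.inverse_eq_inv']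
    have : R⁻¹ i j ∈ D0 F := by
      rw [h5]
      exact mul_mem (rdef_inv hdetmem hdetev) hadj
    exact this
  refine ⟨hdef, ?_⟩
  have h1 : R * R⁻¹ = 1 := Matrix.mul_nonsing_inv R hUdet
  have h2 : matEval R 0 * matEval R⁻¹ 0 = 1 := by
    rw [← matEval_mul h.1 hdef, h1, matEval_one]
  have h3 := congrArg Matrix.det h2
  rw [Matrix.det_mul, Matrix.det_one] at h3
  exact IsUnit.of_mul_eq_one _ (by rw [mul_comm] at h3; exact h3)

end Matrices

/-! ### Truncated Toeplitz representation and flattening -/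

variable (F) in
/-- The ring hom from power series to `t × t` lower-triangular Toeplitz matrices. -/
noncomputable def Ttoep (t : ℕ) : PowerSeries F →+* Matrix (Fin t) (Fin t) F where
  toFun s := fun k l =>
    if (l : ℕ) ≤ (k : ℕ) then PowerSeries.coeff (R := F) ((k : ℕ) - (l : ℕ)) s else 0
  map_zero' := by ext k l; simp
  map_one' := by
    ext k l
    have hkl : (k = l) ↔ ((k : ℕ) = (l : ℕ)) := Fin.ext_iff
    simp only [Matrix.one_apply, PowerSeries.coeff_one]
    split_ifs <;> simp_all <;> omega
  map_add' x y := by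
    ext k l
    erw [Matrix.add_apply]
    simp only [map_add]
    split_ifs <;> simp
  map_mul' x y := by
    ext k l
    erw [Matrix.mul_apply]
    by_cases h : (l : ℕ) ≤ (k : ℕ)
    · rw [if_pos h, PowerSeries.coeff_mul,
        Finset.Nat.sum_antidiagonal_eq_sum_range_succ_mk]
      have hfin : (∑ j : Fin t,
          (if (j : ℕ) ≤ (k : ℕ) then PowerSeries.coeff (R := F) ((k : ℕ) - (j : ℕ)) x else 0) *
            (if (l : ℕ) ≤ (j : ℕ) then PowerSeries.coeff (R := F) ((j : ℕ) - (l : ℕ)) y else 0))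
          = ∑ n ∈ Finset.range t,
          (if n ≤ (k : ℕ) then PowerSeries.coeff (R := F) ((k : ℕ) - n) x else 0) *
            (if (l : ℕ) ≤ n then PowerSeries.coeff (R := F) (n - (l : ℕ)) y else 0) :=
        Fin.sum_univ_eq_sum_range (fun n =>
          (if n ≤ (k : ℕ) then PowerSeries.coeff (R := F) ((k : ℕ) - n) x else 0) *
            (if (l : ℕ) ≤ n then PowerSeries.coeff (R := F) (n - (l : ℕ)) y else 0)) t
      rw [hfin]
      have hsub : Finset.Icc (l : ℕ) (k : ℕ) ⊆ Finset.range t := by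
        intro n hn
        rw [Finset.mem_Icc] at hn
        rw [Finset.mem_range]
        exact lt_of_le_of_lt hn.2 k.2
      rw [← Finset.sum_subset hsub (by
        intro n hn hnot
        rw [Finset.mem_Icc] at hnot
        rw [Finset.mem_range] at hn
        rcases le_or_gt (l : ℕ) n with h1 | h1
        · rw [if_neg (by omega : ¬ n ≤ (k : ℕ)), zero_mul]
        · rw [if_neg (by omega : ¬ (l : ℕ) ≤ n), mul_zero])]
      refine Finset.sum_nbij' (fun u => (k : ℕ) - u) (fun n => (k : ℕ) - n) ?_ ?_ ?_ ?_ ?_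
      · intro u hu
        simp only [Finset.mem_range, Nat.lt_succ_iff] at hu
        simp only [Finset.mem_Icc]
        omega
      · intro n hn
        simp only [Finset.mem_Icc] at hn
        simp only [Finset.mem_range, Nat.lt_succ_iff]
        omega
      · intro u hu
        simp only [Finset.mem_range, Nat.lt_succ_iff] at hu
        try simp only []
        omega
      · intro n hn
        simp only [Finset.mem_Icc] at hn
        try simp only []
        omega
      · intro u hu
        simp only [Finset.mem_range, Nat.lt_succ_iff] at hu
        have h1 : (k : ℕ) - u ≤ (k : ℕ) := by omega
        have h2 : (l : ℕ) ≤ (k : ℕ) - u := by omega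
        have e1 : (k : ℕ) - ((k : ℕ) - u) = u := by omega
        have e2 : ((k : ℕ) - u) - (l : ℕ) = (k : ℕ) - (l : ℕ) - u := by omega
        simp only [if_pos h1, if_pos h2, e1, e2]
    · rw [if_neg h]
      symm
      apply Finset.sum_eq_zero
      intro j _
      rcases le_or_gt (l : ℕ) (j : ℕ) with h1 | h1
      · rw [if_neg (by omega : ¬ (j : ℕ) ≤ (k : ℕ)), zero_mul]
      · rw [if_neg (by omega : ¬ (l : ℕ) ≤ (j : ℕ)), mul_zero]

/-- Flattening a matrix of matrices. -/
def flat {p m t : ℕ} (M : Matrix (Fin p) (Fin m) (Matrix (Fin t) (Fin t) F)) :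
    Matrix (Fin p × Fin t) (Fin m × Fin t) F := fun x y => M x.1 y.1 x.2 y.2

lemma flat_mul {p m q t : ℕ} (M : Matrix (Fin p) (Fin m) (Matrix (Fin t) (Fin t) F))
    (N : Matrix (Fin m) (Fin q) (Matrix (Fin t) (Fin t) F)) :
    flat (M * N) = flat M * flat N := by
  ext ⟨i, k⟩ ⟨j, l⟩
  calc flat (M * N) (i, k) (j, l) = ∑ c, (M i c * N c j) k l := by
        rw [show flat (M * N) (i, k) (j, l) = (M * N) i j k l from rfl, Matrix.mul_apply,
          Matrix.sum_apply]
    _ = ∑ c, ∑ d, M i c k d * N c j d l := by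
        refine Finset.sum_congr rfl fun c _ => ?_
        rw [Matrix.mul_apply]
    _ = (flat M * flat N) (i, k) (j, l) := by
        rw [Matrix.mul_apply, Fintype.sum_prod_type]
        rfl

lemma flat_one {p t : ℕ} :
    flat (1 : Matrix (Fin p) (Fin p) (Matrix (Fin t) (Fin t) F)) = 1 := by
  ext ⟨i, k⟩ ⟨j, l⟩
  rw [show flat (1 : Matrix (Fin p) (Fin p) (Matrix (Fin t) (Fin t) F)) (i, k) (j, l)
      = ((1 : Matrix (Fin p) (Fin p) (Matrix (Fin t) (Fin t) F)) i j) k l from rfl]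
  rcases eq_or_ne i j with rfl | hij
  · rw [Matrix.one_apply_eq]
    rcases eq_or_ne k l with rfl | hkl
    · rw [Matrix.one_apply_eq, Matrix.one_apply_eq]
    · rw [Matrix.one_apply_ne hkl, Matrix.one_apply_ne (by simp [Prod.ext_iff, hkl])]
  · rw [Matrix.one_apply_ne hij, Matrix.one_apply_ne (by simp [Prod.ext_iff, hij])]
    rfl

/-- The big flattened Toeplitz representation of a power-series matrix. -/
noncomputable def big (t : ℕ) {p m : ℕ} (M : Matrix (Fin p) (Fin m) PS) :
    Matrix (Fin p × Fin t) (Fin m × Fin t) F := flat (M.map (Ttoep F t))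

lemma big_mul (t : ℕ) {p m q : ℕ} (M : Matrix (Fin p) (Fin m) PS)
    (N : Matrix (Fin m) (Fin q) PS) :
    big t (M * N) = big t M * big t N := by
  unfold big
  rw [Matrix.map_mul, flat_mul]

lemma big_one (t : ℕ) {p : ℕ} : big t (1 : Matrix (Fin p) (Fin p) PS) = 1 := by
  unfold big
  rw [Matrix.map_one _ (map_zero _) (_root_.map_one _), flat_one]

/-- Rank of a matrix whose columns are distinct standard basis vectors or zero. -/
lemma rank_cols {ι κ : Type*} [Fintype ι] [Fintype κ] [DecidableEq ι] [DecidableEq κ]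
    (M : Matrix ι κ F) (P : κ → Prop) [DecidablePred P]
    (τ : {y // P y} → ι) (hinj : Function.Injective τ)
    (hcol : ∀ y : {y // P y}, (fun i => M i y.1) = (Pi.single (τ y) (1 : F) : ι → F))
    (hcol0 : ∀ y, ¬ P y → (fun i => M i y) = 0) :
    M.rank = Fintype.card {y // P y} := by
  rw [Matrix.rank_eq_finrank_span_cols]
  have hT : ∀ y, M.transpose y = fun i => M i y := fun y => rfl
  have hspan : Submodule.span F (Set.range M.transpose)
      = Submodule.span F (Set.range fun y : {y // P y} => (Pi.single (τ y) (1 : F) : ι → F)) := by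
    apply le_antisymm <;> rw [Submodule.span_le]
    · rintro _ ⟨y, rfl⟩
      by_cases h : P y
      · exact Submodule.subset_span ⟨⟨y, h⟩, ((hT y).trans (hcol ⟨y, h⟩)).symm⟩
      · rw [show M.transpose y = 0 from (hT y).trans (hcol0 y h)]
        exact Submodule.zero_mem _
    · rintro _ ⟨⟨y, h⟩, rfl⟩
      exact Submodule.subset_span ⟨y, (hT y).trans (hcol ⟨y, h⟩)⟩
  rw [show Set.range M.col = Set.range Mᵀ from rfl, hspan]
  have hli : LinearIndependent F (fun y : {y // P y} => (Pi.single (τ y) (1 : F) : ι → F)) := by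
    have hb := (Pi.basisFun F ι).linearIndependent
    have hcomp := hb.comp τ hinj
    have hfun : (⇑(Pi.basisFun F ι) ∘ τ)
        = fun y : {y // P y} => (Pi.single (τ y) (1 : F) : ι → F) := by
      funext y
      simp [Pi.basisFun_apply]
    rwa [hfun] at hcomp
  rw [finrank_span_eq_card hli]

/-! ### Diagonal local forms and their ranks -/

lemma localPow_zero_eq (k : ℤ) : localPow (0 : F) k = (RatFunc.X : K) ^ k := by
  unfold localPow
  rw [Polynomial.C_0, sub_zero, RatFunc.algebraMap_X]

lemma localPow_natCast (n : ℕ) :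
    localPow (0 : F) (n : ℤ) = algebraMap (Polynomial F) K (Polynomial.X ^ n) := by
  rw [localPow_zero_eq, zpow_natCast, map_pow, RatFunc.algebraMap_X]

lemma smul_localDiag (p m r : ℕ) (e : Fin r → ℤ) (N : ℕ) :
    ((RatFunc.X : K) ^ (N : ℤ)) • localDiag p m (0 : F) e
      = localDiag p m (0 : F) (fun i => e i + N) := by
  ext i j
  rw [Matrix.smul_apply]
  unfold localDiag
  split_ifs with h
  · rw [smul_eq_mul, localPow_zero_eq, localPow_zero_eq, ← zpow_add₀ RatFunc.X_ne_zero]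
    congr 1
    ring
  · rw [smul_eq_mul, mul_zero]

lemma definedAt_localDiag (p m r : ℕ) (a : Fin r → ℕ) :
    DefinedAt (localDiag p m (0 : F) (fun i => ((a i : ℕ) : ℤ))) 0 := by
  intro i j
  unfold localDiag
  split_ifs with h
  · rw [localPow_natCast]
    exact rdef_algebraMap _
  · exact rdef_zero

variable (F) in
/-- The power series diagonal matrix with exponents `a`. -/
noncomputable def DPS (p m : ℕ) {r : ℕ} (a : Fin r → ℕ) :
    Matrix (Fin p) (Fin m) PS := fun i j =>
  if h : (i : ℕ) = (j : ℕ) ∧ (j : ℕ) < r then (PowerSeries.X : PS) ^ (a ⟨(j : ℕ), h.2⟩) else 0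

lemma psi_mk_congr {x y : K} (hxy : x = y) (hx : RDefinedAt x 0) (hy : RDefinedAt y 0) :
    psi ⟨x, hx⟩ = psi ⟨y, hy⟩ := by
  subst hxy; rfl

lemma matPS_localDiag (p m r : ℕ) (a : Fin r → ℕ) :
    matPS (localDiag p m (0 : F) (fun i => ((a i : ℕ) : ℤ))) (definedAt_localDiag p m r a)
      = DPS F p m a := by
  refine Matrix.ext fun i j => ?_
  show psi ⟨localDiag p m (0 : F) (fun i => ((a i : ℕ) : ℤ)) i j, _⟩ = DPS F p m a i j
  by_cases h : (i : ℕ) = (j : ℕ) ∧ (j : ℕ) < r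
  · have hval : localDiag p m (0 : F) (fun i => ((a i : ℕ) : ℤ)) i j
        = algebraMap (Polynomial F) K (Polynomial.X ^ (a ⟨(j : ℕ), h.2⟩)) := by
      unfold localDiag
      rw [dif_pos h, localPow_natCast]
    rw [psi_mk_congr hval _ (rdef_algebraMap _)]
    erw [psi_algebraMap]
    unfold DPS
    rw [dif_pos h]
    rw [show PC (Polynomial.X ^ (a ⟨(j : ℕ), h.2⟩))
        = (PC Polynomial.X) ^ (a ⟨(j : ℕ), h.2⟩) from map_pow PC _ _]
    congr 1
    rw [show PC Polynomial.X = ((Polynomial.X : Polynomial F) : PS)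
      from Polynomial.coeToPowerSeries.ringHom_apply]
    exact Polynomial.coe_X
  · have hval : localDiag p m (0 : F) (fun i => ((a i : ℕ) : ℤ)) i j = 0 := by
      unfold localDiag
      rw [dif_neg h]
    rw [psi_mk_congr hval _ rdef_zero]
    rw [show (⟨(0 : K), rdef_zero⟩ : D0 F) = 0 from rfl, map_zero]
    unfold DPS
    rw [dif_neg h]

lemma Ttoep_apply (t : ℕ) (s : PS) (k l : Fin t) :
    Ttoep F t s k l
      = if (l : ℕ) ≤ (k : ℕ) then PowerSeries.coeff (R := F) ((k : ℕ) - (l : ℕ)) s else 0 := rfl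

lemma big_apply (t : ℕ) {p m : ℕ} (M : Matrix (Fin p) (Fin m) PS)
    (i : Fin p) (k : Fin t) (j : Fin m) (l : Fin t) :
    big t M (i, k) (j, l) = Ttoep F t (M i j) k l := rfl

lemma rank_big_DPS (t : ℕ) {p m r : ℕ} (hrp : r ≤ p) (hrm : r ≤ m) (a : Fin r → ℕ) :
    (big t (DPS F p m a)).rank = ∑ i : Fin r, (t - a i) := by
  classical
  set A : Fin m → ℕ := fun j => if h : (j : ℕ) < r then a ⟨(j : ℕ), h⟩ else 0 with hA
  set P : Fin m × Fin t → Prop := fun y => (y.1 : ℕ) < r ∧ (y.2 : ℕ) + A y.1 < t with hP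
  have hPdef : ∀ y, P y ↔ ((y.1 : ℕ) < r ∧ (y.2 : ℕ) + A y.1 < t) := fun y => Iff.rfl
  set τ : {y // P y} → Fin p × Fin t := fun y =>
    (⟨(y.1.1 : ℕ), lt_of_lt_of_le y.2.1 hrp⟩, ⟨(y.1.2 : ℕ) + A y.1.1, y.2.2⟩) with hτ
  have hAa : ∀ (j : Fin m) (hj : (j : ℕ) < r), A j = a ⟨(j : ℕ), hj⟩ := by
    intro j hj
    rw [hA]
    exact dif_pos hj
  have hrank : (big t (DPS F p m a)).rank = Fintype.card {y // P y} := by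
    refine rank_cols (big t (DPS F p m a)) P τ ?_ ?_ ?_
    · -- injectivity
      intro y z hyz
      simp only [hτ, Prod.mk.injEq, Fin.mk.injEq] at hyz
      have h1' : y.1.1 = z.1.1 := Fin.ext hyz.1
      have h2 := hyz.2
      rw [h1'] at h2
      have h3 : y.1.2 = z.1.2 := Fin.ext (by omega)
      exact Subtype.ext (Prod.ext h1' h3)
    · -- columns on P
      rintro ⟨⟨j, l⟩, hy⟩
      funext x
      obtain ⟨i, k⟩ := x
      rw [big_apply]
      rw [Pi.single_apply]
      have hy1 : (j : ℕ) < r := hy.1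
      have hy2 : (l : ℕ) + A j < t := hy.2
      have hcond : (((i, k) : Fin p × Fin t) = τ ⟨(j, l), hy⟩)
          ↔ ((i : ℕ) = (j : ℕ) ∧ (k : ℕ) = (l : ℕ) + A j) := by
        rw [hτ, Prod.ext_iff, Fin.ext_iff, Fin.ext_iff]
      by_cases hij : (i : ℕ) = (j : ℕ)
      · have hDPS : DPS F p m a i j = (PowerSeries.X : PS) ^ (A j) := by
          unfold DPS
          rw [dif_pos ⟨hij, hy1⟩, hAa j hy1]
        rw [hDPS, Ttoep_apply]
        rw [show (PowerSeries.coeff (R := F) ((k : ℕ) - (l : ℕ))) ((PowerSeries.X : PS) ^ (A j))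
          = if (k : ℕ) - (l : ℕ) = A j then 1 else 0 from PowerSeries.coeff_X_pow _ _]
        by_cases h1 : (l : ℕ) ≤ (k : ℕ)
        · by_cases h2 : (k : ℕ) - (l : ℕ) = A j
          · rw [if_pos h1, if_pos h2, if_pos (hcond.mpr ⟨hij, by omega⟩)]
          · rw [if_pos h1, if_neg h2,
              if_neg (fun hc => h2 (by have := (hcond.mp hc).2; omega))]
        · rw [if_neg h1, if_neg (fun hc => h1 (by have := (hcond.mp hc).2; omega))]
      · have hDPS : DPS F p m a i j = 0 := by
          unfold DPS
          rw [dif_neg (by intro hc; exact hij hc.1)]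
        rw [hDPS, map_zero, Matrix.zero_apply]
        rw [if_neg (by intro hc; exact hij (hcond.mp hc).1)]
    · -- zero columns
      rintro ⟨j, l⟩ hy
      funext x
      obtain ⟨i, k⟩ := x
      rw [big_apply]
      by_cases h : (i : ℕ) = (j : ℕ) ∧ (j : ℕ) < r
      · have hnt : ¬ ((l : ℕ) + A j < t) := by
          intro hc
          exact hy ⟨h.2, hc⟩
        have hDPS : DPS F p m a i j = (PowerSeries.X : PS) ^ (A j) := by
          unfold DPS
          rw [dif_pos h, hAa j h.2]
        rw [hDPS, Ttoep_apply]
        rw [show (PowerSeries.coeff (R := F) ((k : ℕ) - (l : ℕ))) ((PowerSeries.X : PS) ^ (A j))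
          = if (k : ℕ) - (l : ℕ) = A j then 1 else 0 from PowerSeries.coeff_X_pow _ _]
        have hk := k.2
        have : ¬ ((l : ℕ) ≤ (k : ℕ) ∧ (k : ℕ) - (l : ℕ) = A j) := by omega
        split_ifs with h1 h2 <;> first | rfl | omega
      · have hDPS : DPS F p m a i j = 0 := by
          unfold DPS
          rw [dif_neg h]
        rw [hDPS, map_zero, Matrix.zero_apply]
        rfl
  rw [hrank]
  -- now count
  rw [Fintype.card_subtype, Finset.card_filter]
  rw [show (∑ y : Fin m × Fin t, if P y then 1 else 0)
      = ∑ j : Fin m, ∑ l : Fin t, (if P (j, l) then 1 else 0)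
    from Fintype.sum_prod_type _]
  set g : ℕ → ℕ := fun n => if h : n < r then t - a ⟨n, h⟩ else 0 with hg
  have hinner : ∀ j : Fin m, (∑ l : Fin t, if P (j, l) then 1 else 0) = g (j : ℕ) := by
    intro j
    by_cases hj : (j : ℕ) < r
    · simp only [hg]
      rw [dif_pos hj]
      have hterm : ∀ l : Fin t, (if P (j, l) then 1 else 0)
          = (if (l : ℕ) + A j < t then (1 : ℕ) else 0) := by
        intro l
        by_cases hpl : (l : ℕ) + A j < t
        · rw [if_pos (show P (j, l) from ⟨hj, hpl⟩), if_pos hpl]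
        · rw [if_neg (show ¬ P (j, l) from fun hc => hpl hc.2), if_neg hpl]
      rw [Finset.sum_congr rfl fun l _ => hterm l]
      rw [Fin.sum_univ_eq_sum_range (fun n => if n + A j < t then (1 : ℕ) else 0) t]
      rw [← Finset.card_filter]
      rw [show (Finset.range t).filter (fun n => n + A j < t) = Finset.range (t - A j) from by
        ext n
        simp only [Finset.mem_filter, Finset.mem_range]
        omega]
      rw [Finset.card_range, hAa j hj]
    · simp only [hg]
      rw [dif_neg hj]
      apply Finset.sum_eq_zero
      intro l _
      rw [if_neg]
      intro hPy
      exact hj hPy.1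
  rw [Finset.sum_congr rfl fun j _ => hinner j]
  rw [Fin.sum_univ_eq_sum_range g m]
  rw [← Finset.sum_subset (Finset.range_subset_range.mpr hrm) (by
    intro n _ hn
    rw [Finset.mem_range] at hn
    simp only [hg]
    exact dif_neg hn)]
  rw [← Fin.sum_univ_eq_sum_range g r]
  apply Finset.sum_congr rfl
  intro i _
  simp only [hg]
  rw [dif_pos i.2]

/-! ### Uniqueness of the diagonal form at 0 -/

lemma monotone_eq_of_counts {r : ℕ} (a b : Fin r → ℕ) (ha : Monotone a) (hb : Monotone b)
    (h : ∀ t : ℕ, ∑ i : Fin r, (t - a i) = ∑ i : Fin r, (t - b i)) : a = b := by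
  have hcnt : ∀ t : ℕ, (Finset.univ.filter fun i => a i ≤ t).card
      = (Finset.univ.filter fun i => b i ≤ t).card := by
    intro t
    have key : ∀ c : Fin r → ℕ, ∑ i : Fin r, ((t + 1) - c i)
        = (∑ i : Fin r, (t - c i)) + (Finset.univ.filter fun i => c i ≤ t).card := by
      intro c
      rw [Finset.card_filter, ← Finset.sum_add_distrib]
      apply Finset.sum_congr rfl
      intro i _
      split_ifs with hc <;> omega
    have h1 := h t
    have h2 := h (t + 1)
    have k1 := key a
    have k2 := key b
    omega
  have hle : ∀ (a b : Fin r → ℕ), Monotone a → Monotone b →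
      (∀ t : ℕ, (Finset.univ.filter fun i => a i ≤ t).card
        = (Finset.univ.filter fun i => b i ≤ t).card) → ∀ i, a i ≤ b i := by
    intro a b ha hb hc i
    by_contra hlt
    push_neg at hlt
    have c1 : Finset.Iic i ⊆ Finset.univ.filter fun j => b j ≤ b i := by
      intro j hj
      rw [Finset.mem_filter]
      exact ⟨Finset.mem_univ _, hb (Finset.mem_Iic.mp hj)⟩
    have c2 : (Finset.univ.filter fun j => a j ≤ b i) ⊆ Finset.Iio i := by
      intro j hj
      rw [Finset.mem_filter] at hj
      rw [Finset.mem_Iio]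
      by_contra hji
      push_neg at hji
      have := ha hji
      have := hj.2
      omega
    have c3 : (Finset.Iio i).card < (Finset.Iic i).card := by
      apply Finset.card_lt_card
      rw [Finset.ssubset_iff_of_subset
        (fun j hj => Finset.mem_Iic.mpr (le_of_lt (Finset.mem_Iio.mp hj)))]
      exact ⟨i, Finset.mem_Iic.mpr le_rfl, by simp⟩
    have d1 := Finset.card_le_card c1
    have d2 := Finset.card_le_card c2
    have d3 := hc (b i)
    omega
  funext i
  exact le_antisymm (hle a b ha hb hcnt i) (hle b a hb ha (fun t => (hcnt t).symm) i)

lemma diag_unique {p m r : ℕ} (hrp : r ≤ p) (hrm : r ≤ m) (e f : Fin r → ℤ)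
    (hme : Monotone e) (hmf : Monotone f)
    (h : EquivAt (localDiag p m (0 : F) e) (localDiag p m (0 : F) f) 0) : e = f := by
  obtain ⟨R₁, R₂, hR₁, hR₂, heq⟩ := h
  obtain ⟨N, hN⟩ : ∃ N : ℕ, ∀ i, 0 ≤ e i + N ∧ 0 ≤ f i + N := by
    refine ⟨Finset.univ.sup fun i => ((-e i).toNat ⊔ (-f i).toNat), fun i => ?_⟩
    have h1 := Finset.le_sup (f := fun i => ((-e i).toNat ⊔ (-f i).toNat)) (Finset.mem_univ i)
    have h2 : (-e i).toNat ≤ Finset.univ.sup fun i => ((-e i).toNat ⊔ (-f i).toNat) :=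
      le_trans (le_max_left _ _) h1
    have h3 : (-f i).toNat ≤ Finset.univ.sup fun i => ((-e i).toNat ⊔ (-f i).toNat) :=
      le_trans (le_max_right _ _) h1
    have h4 := Int.self_le_toNat (-e i)
    have h5 := Int.self_le_toNat (-f i)
    omega
  set a : Fin r → ℕ := fun i => (e i + N).toNat with ha
  set b : Fin r → ℕ := fun i => (f i + N).toNat with hb
  have hea : (fun i => e i + (N : ℤ)) = fun i => ((a i : ℕ) : ℤ) := by
    funext i
    simp only [ha]
    rw [Int.toNat_of_nonneg (hN i).1]
  have hfb : (fun i => f i + (N : ℤ)) = fun i => ((b i : ℕ) : ℤ) := by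
    funext i
    simp only [hb]
    rw [Int.toNat_of_nonneg (hN i).2]
  have heq2 : R₁ * localDiag p m (0 : F) (fun i => ((a i : ℕ) : ℤ)) * R₂
      = localDiag p m (0 : F) (fun i => ((b i : ℕ) : ℤ)) := by
    have step : R₁ * (((RatFunc.X : K) ^ (N : ℤ)) • localDiag p m (0 : F) e) * R₂
        = ((RatFunc.X : K) ^ (N : ℤ)) • localDiag p m (0 : F) f := by
      rw [Matrix.mul_smul, Matrix.smul_mul, heq]
    rw [smul_localDiag, smul_localDiag, hea, hfb] at step
    exact step
  have hda := definedAt_localDiag (F := F) p m r a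
  have hdb := definedAt_localDiag (F := F) p m r b
  have hPSeq : matPS R₁ hR₁.1 * DPS F p m a * matPS R₂ hR₂.1 = DPS F p m b := by
    rw [← matPS_localDiag p m r a, ← matPS_localDiag p m r b]
    rw [← matPS_mul hR₁.1 hda (definedAt_mul hR₁.1 hda)]
    rw [← matPS_mul (definedAt_mul hR₁.1 hda) hR₂.1
      (definedAt_mul (definedAt_mul hR₁.1 hda) hR₂.1)]
    exact matPS_congr heq2 _ _
  have hR₁inv := regularAt_inv hR₁
  have hR₂inv := regularAt_inv hR₂
  have hU : ∀ {n : ℕ} (R : Matrix (Fin n) (Fin n) K) (hR : RegularAt R 0) (t : ℕ),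
      IsUnit (big t (matPS R hR.1)).det := by
    intro n R hR t
    have hRinv := regularAt_inv hR
    have h1 : matPS R hR.1 * matPS R⁻¹ hRinv.1 = 1 := by
      rw [← matPS_mul hR.1 hRinv.1 (definedAt_mul hR.1 hRinv.1)]
      rw [matPS_congr (Matrix.mul_nonsing_inv R
        (isUnit_iff_ne_zero.mpr (regularAt_det_ne_zero hR))) _ definedAt_one, matPS_one]
    have h2 := congrArg (big t) h1
    rw [big_mul, big_one] at h2
    have h3 := congrArg Matrix.det h2
    rw [Matrix.det_mul, Matrix.det_one] at h3
    exact IsUnit.of_mul_eq_one _ h3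
  have hsum : ∀ t : ℕ, ∑ i : Fin r, (t - a i) = ∑ i : Fin r, (t - b i) := by
    intro t
    have h1 := congrArg (big t) hPSeq
    rw [big_mul, big_mul] at h1
    have h2 : (big t (DPS F p m b)).rank = (big t (DPS F p m a)).rank := by
      rw [← h1]
      rw [Matrix.rank_mul_eq_left_of_isUnit_det _ _ (hU R₂ hR₂ t)]
      rw [Matrix.rank_mul_eq_right_of_isUnit_det _ _ (hU R₁ hR₁ t)]
    rw [rank_big_DPS t hrp hrm a, rank_big_DPS t hrp hrm b] at h2
    exact h2.symm
  have hma : Monotone a := fun i j hij => Int.toNat_le_toNat (by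
    have := hme hij
    omega)
  have hmb : Monotone b := fun i j hij => Int.toNat_le_toNat (by
    have := hmf hij
    omega)
  have hab : a = b := monotone_eq_of_counts a b hma hmb hsum
  funext i
  have h1 := congrFun hab i
  simp only [ha, hb] at h1
  have h2 := (hN i).1
  have h3 := (hN i).2
  omega

/-! ### The substitution `λ ↦ 1/λ` -/

lemma reflect_algebraMap (n : ℕ) (p : Polynomial F) (hn : p.natDegree ≤ n) :
    algebraMap (Polynomial F) K (p.reflect n)
      = (RatFunc.X : K) ^ n * Polynomial.aeval (RatFunc.X : K)⁻¹ p := by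
  have key : ∀ (s : Finset ℕ), (∀ i ∈ s, i ≤ n) → ∀ (c : ℕ → F),
      algebraMap (Polynomial F) K ((∑ i ∈ s, Polynomial.C (c i) * Polynomial.X ^ i).reflect n)
        = (RatFunc.X : K) ^ n *
          Polynomial.aeval (RatFunc.X : K)⁻¹ (∑ i ∈ s, Polynomial.C (c i) * Polynomial.X ^ i) := by
    intro s
    induction s using Finset.induction_on with
    | empty =>
      intro _ c
      simp
    | @insert k s hk ih =>
      intro hs c
      have hk_le : k ≤ n := hs k (Finset.mem_insert_self k s)
      rw [Finset.sum_insert hk, Polynomial.reflect_add, _root_.map_add, _root_.map_add,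
        mul_add, ih (fun i hi => hs i (Finset.mem_insert_of_mem hi)) c]
      congr 1
      rw [Polynomial.reflect_C_mul_X_pow, Polynomial.revAt_le hk_le]
      rw [_root_.map_mul, _root_.map_mul]
      rw [show algebraMap (Polynomial F) K (Polynomial.X ^ (n - k))
          = (RatFunc.X : K) ^ (n - k) from by rw [map_pow, RatFunc.algebraMap_X]]
      rw [show (Polynomial.aeval ((RatFunc.X : K)⁻¹)) (Polynomial.X ^ k)
          = ((RatFunc.X : K)⁻¹) ^ k from by rw [map_pow, Polynomial.aeval_X]]
      rw [show (Polynomial.aeval ((RatFunc.X : K)⁻¹)) (Polynomial.C (c k))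
          = algebraMap F K (c k) from Polynomial.aeval_C _ _]
      rw [RatFunc.algebraMap_C, RatFunc.algebraMap_eq_C]
      rw [pow_sub₀ _ RatFunc.X_ne_zero hk_le, inv_pow]
      ring
  have hp : p = ∑ i ∈ Finset.range (n + 1), Polynomial.C (p.coeff i) * Polynomial.X ^ i := by
    conv_lhs => rw [p.as_sum_range' (n + 1) (Nat.lt_succ_of_le hn)]
    exact Finset.sum_congr rfl fun i _ => (Polynomial.C_mul_X_pow_eq_monomial).symm
  rw [hp]
  exact key (Finset.range (n + 1)) (fun i hi => by rw [Finset.mem_range] at hi; omega) p.coeff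

lemma reflect_coeff_ne_zero {p : Polynomial F} (hp : p ≠ 0) {n : ℕ} (hn : p.natDegree = n) :
    (p.reflect n).eval 0 ≠ 0 := by
  rw [← Polynomial.coeff_zero_eq_eval_zero, Polynomial.coeff_reflect,
    Polynomial.revAt_le (Nat.zero_le _), Nat.sub_zero, ← hn, Polynomial.coeff_natDegree]
  exact Polynomial.leadingCoeff_ne_zero.mpr hp

lemma aeval_Xinv_ne_zero {p : Polynomial F} (hp : p ≠ 0) :
    Polynomial.aeval (RatFunc.X : K)⁻¹ p ≠ 0 := by
  intro h0
  have h1 := reflect_algebraMap p.natDegree p le_rfl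
  rw [h0, mul_zero] at h1
  have h2 : (p.reflect p.natDegree).eval 0 ≠ 0 := reflect_coeff_ne_zero hp rfl
  apply h2
  have h3 : p.reflect p.natDegree = 0 := by
    by_contra hc
    exact RatFunc.algebraMap_ne_zero hc h1
  rw [h3]
  simp

lemma aevalXinv_injective :
    Function.Injective ⇑((Polynomial.aeval (RatFunc.X : K)⁻¹).toRingHom :
      Polynomial F →+* K) := by
  rw [injective_iff_map_eq_zero]
  intro p hp
  by_contra hc
  exact aeval_Xinv_ne_zero hc (by simpa using hp)

/-- The field endomorphism of `RatFunc F` substituting `λ ↦ 1/λ`. -/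
noncomputable def phi : RatFunc F →+* RatFunc F :=
  IsFractionRing.lift aevalXinv_injective

lemma phi_algebraMap (p : Polynomial F) :
    phi (algebraMap (Polynomial F) K p) = Polynomial.aeval (RatFunc.X : K)⁻¹ p := by
  unfold phi
  rw [IsFractionRing.lift_algebraMap]
  rfl

lemma phi_eq_rAtInv (x : K) : rAtInv x = phi x := by
  unfold rAtInv
  rw [← Polynomial.aeval_def, ← Polynomial.aeval_def, ← phi_algebraMap, ← phi_algebraMap]
  rw [← map_div₀ (phi (F := F)), RatFunc.num_div_denom]

lemma phi_X : phi (RatFunc.X : K) = (RatFunc.X : K)⁻¹ := by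
  conv_lhs => rw [← RatFunc.algebraMap_X]
  rw [phi_algebraMap, Polynomial.aeval_X]

lemma proper_phi_defined {x : K} (h : ProperR x) : RDefinedAt (phi x) 0 := by
  by_cases hx : x = 0
  · subst hx
    rw [map_zero]
    exact rdef_zero
  · set n := x.denom.natDegree with hn
    have hnum : x.num.natDegree ≤ n := Polynomial.natDegree_le_natDegree h
    have hXn : (RatFunc.X : K) ^ n ≠ 0 := pow_ne_zero _ RatFunc.X_ne_zero
    have hphix : phi x = algebraMap (Polynomial F) K (x.num.reflect n)
        / algebraMap (Polynomial F) K (x.denom.reflect n) := by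
      conv_lhs => rw [← RatFunc.num_div_denom x]
      rw [map_div₀, phi_algebraMap, phi_algebraMap]
      rw [reflect_algebraMap n x.num hnum, reflect_algebraMap n x.denom le_rfl,
        mul_div_mul_left _ _ hXn]
    have hrefl0 : (x.denom.reflect n).eval 0 ≠ 0 :=
      reflect_coeff_ne_zero (RatFunc.denom_ne_zero x) rfl
    have hrefl_ne : x.denom.reflect n ≠ 0 := by
      intro hc
      apply hrefl0
      rw [hc]
      simp
    have hdvd : (phi x).denom ∣ x.denom.reflect n := by
      rw [RatFunc.denom_dvd hrefl_ne]
      exact ⟨x.num.reflect n, hphix⟩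
    exact eval0_ne_of_dvd hdvd hrefl0

lemma matRev_eq_smul_map {ι κ : Type*} (g : ℤ) (M : Matrix ι κ K) :
    matRev g M = ((RatFunc.X : K) ^ g) • (M.map (phi (F := F))) := by
  ext i j
  rw [Matrix.smul_apply, Matrix.map_apply, smul_eq_mul]
  show rRev g (M i j) = _
  unfold rRev
  rw [phi_eq_rAtInv]

lemma biproper_map_phi_regular {ι : Type*} [Fintype ι] [DecidableEq ι]
    {B : Matrix ι ι K} (h : Biproper B) : RegularAt (B.map (phi (F := F))) 0 := by
  obtain ⟨hp, S, hS, hBS, hSB⟩ := h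
  have hdB : DefinedAt (B.map (phi (F := F))) 0 := fun i j => proper_phi_defined (hp i j)
  have hdS : DefinedAt (S.map (phi (F := F))) 0 := fun i j => proper_phi_defined (hS i j)
  refine ⟨hdB, ?_⟩
  have h1 : (B.map (phi (F := F))) * (S.map (phi (F := F))) = 1 := by
    rw [← Matrix.map_mul, hBS, Matrix.map_one _ (map_zero _) (_root_.map_one _)]
  have h2 : matEval (B.map (phi (F := F))) 0 * matEval (S.map (phi (F := F))) 0 = 1 := by
    rw [← matEval_mul hdB hdS, h1, matEval_one]
  have h3 := congrArg Matrix.det h2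
  rw [Matrix.det_mul, Matrix.det_one] at h3
  exact IsUnit.of_mul_eq_one _ h3

lemma matRev_infDiag {p m r : ℕ} (g : ℤ) (μ : Fin r → ℤ) :
    matRev g (infDiag p m μ : Matrix (Fin p) (Fin m) K)
      = localDiag p m (0 : F) (fun i => μ i + g) := by
  rw [matRev_eq_smul_map]
  ext i j
  rw [Matrix.smul_apply, Matrix.map_apply, smul_eq_mul]
  unfold infDiag localDiag
  split_ifs with h
  · rw [map_zpow₀ (phi (F := F)), phi_X, localPow_zero_eq]
    rw [_root_.inv_zpow, ← _root_.zpow_neg, neg_neg]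
    rw [← zpow_add₀ RatFunc.X_ne_zero]
    show (RatFunc.X : K) ^ (g + μ ⟨(j : ℕ), h.2⟩) = (RatFunc.X : K) ^ (μ ⟨(j : ℕ), h.2⟩ + g)
    rw [add_comm]
  · rw [map_zero, mul_zero]

lemma equivAt_of_eqs {ιp ιm : Type*} [Fintype ιp] [Fintype ιm] [DecidableEq ιp]
    [DecidableEq ιm] {M D1 D2 : Matrix ιp ιm K} {R₁ S₁ : Matrix ιp ιp K}
    {R₂ S₂ : Matrix ιm ιm K}
    (hR₁ : RegularAt R₁ 0) (hR₂ : RegularAt R₂ 0) (hS₁ : RegularAt S₁ 0)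
    (hS₂ : RegularAt S₂ 0) (h1 : R₁ * M * R₂ = D1) (h2 : S₁ * M * S₂ = D2) :
    EquivAt D1 D2 0 := by
  have hd1 : IsUnit R₁.det := isUnit_iff_ne_zero.mpr (regularAt_det_ne_zero hR₁)
  have hd2 : IsUnit R₂.det := isUnit_iff_ne_zero.mpr (regularAt_det_ne_zero hR₂)
  refine ⟨S₁ * R₁⁻¹, R₂⁻¹ * S₂, regularAt_mul hS₁ (regularAt_inv hR₁),
    regularAt_mul (regularAt_inv hR₂) hS₂, ?_⟩
  rw [← h1, ← h2]
  calc S₁ * R₁⁻¹ * (R₁ * M * R₂) * (R₂⁻¹ * S₂)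
      = S₁ * (R₁⁻¹ * R₁) * M * (R₂ * R₂⁻¹) * S₂ := by
        simp only [Matrix.mul_assoc]
    _ = S₁ * M * S₂ := by
        rw [Matrix.nonsing_inv_mul _ hd1, Matrix.mul_nonsing_inv _ hd2,
          Matrix.mul_one, Matrix.mul_one]

end RMAux


/-- If `e₁ ≤ … ≤ e_r` are the invariant orders of `rev_g G` at `0` and
`q₁ ≤ … ≤ q_r` are the invariant orders of `G` at `∞`, then `e_i = q_i + g` for all `i`. -/
theorem invOrders_rev_eq_invOrdersAtInf_add {F : Type*} [Field F] [IsAlgClosed F]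
    {p m : ℕ} (G : Matrix (Fin p) (Fin m) (RatFunc F)) (g : ℤ) {r : ℕ}
    (e q : Fin r → ℤ)
    (he : RM.IsInvOrdersAt (RM.matRev g G) (0 : F) e)
    (hq : RM.IsInvOrdersAtInf G q) :
    ∀ i, e i = q i + g := by
  classical
  obtain ⟨hre, hme, hEqe⟩ := he
  obtain ⟨hrG, hmq, B₁, B₂, hB₁, hB₂, hBeq⟩ := hq
  have hrp : r ≤ p := by
    rw [hrG]
    simpa using Matrix.rank_le_card_height G
  have hrm : r ≤ m := by
    rw [hrG]
    simpa using Matrix.rank_le_card_width G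
  have hS₁ := RMAux.biproper_map_phi_regular hB₁
  have hS₂ := RMAux.biproper_map_phi_regular hB₂
  have hrev : (B₁.map (RMAux.phi (F := F))) * RM.matRev g G * (B₂.map (RMAux.phi (F := F)))
      = RM.localDiag p m (0 : F) (fun i => q i + g) := by
    rw [RMAux.matRev_eq_smul_map g G]
    calc (B₁.map (RMAux.phi (F := F)))
          * (((RatFunc.X : RatFunc F) ^ g) • G.map (RMAux.phi (F := F)))
          * (B₂.map (RMAux.phi (F := F)))
        = ((RatFunc.X : RatFunc F) ^ g) • ((B₁.map (RMAux.phi (F := F)))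
            * G.map (RMAux.phi (F := F)) * (B₂.map (RMAux.phi (F := F)))) := by
          rw [Matrix.mul_smul, Matrix.smul_mul]
      _ = ((RatFunc.X : RatFunc F) ^ g) • ((B₁ * G * B₂).map (RMAux.phi (F := F))) := by
          rw [Matrix.map_mul, Matrix.map_mul]
      _ = ((RatFunc.X : RatFunc F) ^ g) • ((RM.infDiag p m q).map (RMAux.phi (F := F))) := by
          rw [hBeq]
      _ = RM.matRev g (RM.infDiag p m q) := (RMAux.matRev_eq_smul_map g _).symm
      _ = RM.localDiag p m (0 : F) (fun i => q i + g) := RMAux.matRev_infDiag g q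
  obtain ⟨R₁, R₂, hR₁, hR₂, hReq⟩ := hEqe
  have hequiv := RMAux.equivAt_of_eqs hR₁ hR₂ hS₁ hS₂ hReq hrev
  have hmono : Monotone fun i => q i + g := fun i j hij => add_le_add_left (hmq hij) g
  have hfinal := RMAux.diag_unique hrp hrm e (fun i => q i + g) hme hmono hequiv
  intro i
  exact congrFun hfinal i
end

section
/- Let R(λ) ∈ F(λ)^{p×m} be a rational matrix of full row normal rank and let T(λ) ∈ F[λ]^{p×m} be a minimal basis of the row space of R(λ), i.e., a minimal basis whose rows span over F(λ) the same rational row space as the rows of R(λ). Then: (a) there exists a unique rational matrix S(λ) ∈ F(λ)^{p×p} with det S(λ) ≢ 0 such that R(λ) = S(λ)T(λ); (b) for any Σ ⊆ F, R(λ) has full row rank in Σ if and only if S(λ) is regular in Σ; (c) R(λ) is a polynomial matrix if and only if S(λ) is a polynomial matrix; (d) if R(λ) is a matrix pencil (polynomial of degree at most 1), then both S(λ) and T(λ) are matrix pencils. -/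
set_option synthInstance.maxHeartbeats 1000000
set_option maxHeartbeats 1000000

open Matrix

namespace RMAux

set_option linter.unusedSectionVars false

open RM Polynomial

variable {F : Type*} [Field F] {a : F}

lemma rdef_of_eq_div {x : RatFunc F} {f g : Polynomial F} (hg : g.eval a ≠ 0)
    (hx : x = algebraMap (Polynomial F) (RatFunc F) f / algebraMap (Polynomial F) (RatFunc F) g) :
    RDefinedAt x a ∧ rEval x a = f.eval a / g.eval a := by
  have hg0 : g ≠ 0 := fun h => hg (by simp [h])
  have hag : algebraMap (Polynomial F) (RatFunc F) g ≠ 0 := RatFunc.algebraMap_ne_zero hg0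
  have had : algebraMap (Polynomial F) (RatFunc F) x.denom ≠ 0 :=
    RatFunc.algebraMap_ne_zero (RatFunc.denom_ne_zero x)
  have hx' : algebraMap (Polynomial F) (RatFunc F) x.num /
      algebraMap (Polynomial F) (RatFunc F) x.denom =
      algebraMap (Polynomial F) (RatFunc F) f / algebraMap (Polynomial F) (RatFunc F) g := by
    rw [RatFunc.num_div_denom]; exact hx
  rw [div_eq_div_iff had hag] at hx'
  have h3 : x.num * g = f * x.denom := by
    apply RatFunc.algebraMap_injective F
    simpa [_root_.map_mul] using hx'
  have h5 : x.num.eval a * g.eval a = f.eval a * x.denom.eval a := by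
    have := congrArg (Polynomial.eval a) h3
    simpa [Polynomial.eval_mul] using this
  have hdef : x.denom.eval a ≠ 0 := by
    intro h0
    have hnum : x.num.eval a = 0 := by
      rcases mul_eq_zero.mp (by rw [h5, h0, mul_zero] : x.num.eval a * g.eval a = 0) with h | h
      · exact h
      · exact absurd h hg
    obtain ⟨u, v, huv⟩ := RatFunc.isCoprime_num_denom x
    have h6 := congrArg (Polynomial.eval a) huv
    simp [hnum, h0] at h6
  refine ⟨hdef, ?_⟩
  show x.num.eval a / x.denom.eval a = _
  rw [div_eq_div_iff hdef hg]; exact h5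

lemma rdef_algebraMap_s15 (f : Polynomial F) :
    RDefinedAt (algebraMap (Polynomial F) (RatFunc F) f) a ∧
      rEval (algebraMap (Polynomial F) (RatFunc F) f) a = f.eval a := by
  have h := rdef_of_eq_div (a := a) (x := algebraMap (Polynomial F) (RatFunc F) f) (f := f)
    (g := 1) (by simp) (by simp)
  simpa using h

lemma rdef_zero_s15 : RDefinedAt (0 : RatFunc F) a ∧ rEval (0 : RatFunc F) a = 0 := by
  have h := rdef_algebraMap_s15 (a := a) (0 : Polynomial F)
  simpa using h

lemma rdef_add {x y : RatFunc F} (hx : RDefinedAt x a) (hy : RDefinedAt y a) :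
    RDefinedAt (x + y) a ∧ rEval (x + y) a = rEval x a + rEval y a := by
  have hdx : Polynomial.eval a x.denom ≠ 0 := hx
  have hdy : Polynomial.eval a y.denom ≠ 0 := hy
  have h1 : algebraMap (Polynomial F) (RatFunc F) x.denom ≠ 0 :=
    RatFunc.algebraMap_ne_zero (RatFunc.denom_ne_zero x)
  have h2 : algebraMap (Polynomial F) (RatFunc F) y.denom ≠ 0 :=
    RatFunc.algebraMap_ne_zero (RatFunc.denom_ne_zero y)
  have hrep : x + y = algebraMap (Polynomial F) (RatFunc F) (x.num * y.denom + x.denom * y.num) /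
      algebraMap (Polynomial F) (RatFunc F) (x.denom * y.denom) := by
    conv_lhs => rw [← RatFunc.num_div_denom x, ← RatFunc.num_div_denom y]
    rw [div_add_div _ _ h1 h2, map_add, _root_.map_mul, _root_.map_mul, _root_.map_mul]
  have hg : (x.denom * y.denom).eval a ≠ 0 := by
    rw [Polynomial.eval_mul]; exact mul_ne_zero hdx hdy
  obtain ⟨hd, he⟩ := rdef_of_eq_div hg hrep
  refine ⟨hd, ?_⟩
  rw [he]
  show _ = x.num.eval a / x.denom.eval a + y.num.eval a / y.denom.eval a
  rw [Polynomial.eval_add, Polynomial.eval_mul, Polynomial.eval_mul, Polynomial.eval_mul]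
  field_simp

lemma rdef_mul {x y : RatFunc F} (hx : RDefinedAt x a) (hy : RDefinedAt y a) :
    RDefinedAt (x * y) a ∧ rEval (x * y) a = rEval x a * rEval y a := by
  have hdx : Polynomial.eval a x.denom ≠ 0 := hx
  have hdy : Polynomial.eval a y.denom ≠ 0 := hy
  have hrep : x * y = algebraMap (Polynomial F) (RatFunc F) (x.num * y.num) /
      algebraMap (Polynomial F) (RatFunc F) (x.denom * y.denom) := by
    conv_lhs => rw [← RatFunc.num_div_denom x, ← RatFunc.num_div_denom y]
    rw [div_mul_div_comm, _root_.map_mul, _root_.map_mul]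
  have hg : (x.denom * y.denom).eval a ≠ 0 := by
    rw [Polynomial.eval_mul]; exact mul_ne_zero hdx hdy
  obtain ⟨hd, he⟩ := rdef_of_eq_div hg hrep
  refine ⟨hd, ?_⟩
  rw [he]
  show _ = x.num.eval a / x.denom.eval a * (y.num.eval a / y.denom.eval a)
  rw [Polynomial.eval_mul, Polynomial.eval_mul]
  field_simp

lemma rdef_sum {ι : Type*} (s : Finset ι) (f : ι → RatFunc F)
    (h : ∀ i ∈ s, RDefinedAt (f i) a) :
    RDefinedAt (∑ i ∈ s, f i) a ∧ rEval (∑ i ∈ s, f i) a = ∑ i ∈ s, rEval (f i) a := by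
  classical
  induction s using Finset.induction_on with
  | empty => simpa using (rdef_zero_s15 (F := F) (a := a))
  | insert b s hnotmem ih =>
    obtain ⟨ihd, ihe⟩ := ih (fun i hi => h i (Finset.mem_insert_of_mem hi))
    have hb := h b (Finset.mem_insert_self _ _)
    obtain ⟨hd, he⟩ := rdef_add hb ihd
    rw [Finset.sum_insert hnotmem, Finset.sum_insert hnotmem]
    exact ⟨hd, by rw [he, ihe]⟩

/-- division lemma -/
lemma rdef_div {x z : RatFunc F} {g : Polynomial F} (hg : g.eval a ≠ 0)
    (hz : RDefinedAt z a) (h : algebraMap (Polynomial F) (RatFunc F) g * x = z) :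
    RDefinedAt x a := by
  have hg0 : g ≠ 0 := fun h0 => hg (by simp [h0])
  have hag : algebraMap (Polynomial F) (RatFunc F) g ≠ 0 := RatFunc.algebraMap_ne_zero hg0
  have hzd : Polynomial.eval a z.denom ≠ 0 := hz
  have hx : x = algebraMap (Polynomial F) (RatFunc F) z.num /
      algebraMap (Polynomial F) (RatFunc F) (g * z.denom) := by
    rw [_root_.map_mul, mul_comm (algebraMap (Polynomial F) (RatFunc F) g), ← div_div,
      RatFunc.num_div_denom, eq_div_iff hag, ← h]
    ring
  have hgz : (g * z.denom).eval a ≠ 0 := by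
    rw [Polynomial.eval_mul]; exact mul_ne_zero hg hzd
  exact (rdef_of_eq_div hgz hx).1

section Mat

variable {ι κ σ : Type*} [Fintype ι] [Fintype κ] [Fintype σ]
variable [DecidableEq ι] [DecidableEq κ] [DecidableEq σ]

lemma matdef_mul {A : Matrix ι κ (RatFunc F)} {B : Matrix κ σ (RatFunc F)}
    (hA : DefinedAt A a) (hB : DefinedAt B a) :
    DefinedAt (A * B) a ∧ matEval (A * B) a = matEval A a * matEval B a := by
  have hterm : ∀ i j, ∀ k ∈ (Finset.univ : Finset κ), RDefinedAt (A i k * B k j) a :=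
    fun i j k _ => (rdef_mul (hA i k) (hB k j)).1
  constructor
  · intro i j
    rw [Matrix.mul_apply]
    exact (rdef_sum _ _ (hterm i j)).1
  · ext i j
    show rEval ((A * B) i j) a = _
    rw [Matrix.mul_apply]
    rw [(rdef_sum _ _ (hterm i j)).2]
    rw [Matrix.mul_apply]
    exact Finset.sum_congr rfl fun k _ => (rdef_mul (hA i k) (hB k j)).2

lemma matdef_toRat (P : Matrix ι κ (Polynomial F)) :
    DefinedAt (toRat P) a ∧ matEval (toRat P) a = polyEval P a := by
  constructor
  · intro i j
    exact (rdef_algebraMap_s15 (P i j)).1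
  · ext i j
    exact (rdef_algebraMap_s15 (P i j)).2

lemma toRat_mul (A : Matrix ι κ (Polynomial F)) (B : Matrix κ σ (Polynomial F)) :
    toRat (A * B) = toRat A * toRat B := by
  ext i j
  simp [toRat, Matrix.mul_apply, map_sum, _root_.map_mul]

lemma polyEval_mul (A : Matrix ι κ (Polynomial F)) (B : Matrix κ σ (Polynomial F)) (b : F) :
    polyEval (A * B) b = polyEval A b * polyEval B b := by
  ext i j
  simp [polyEval, Matrix.mul_apply, Polynomial.eval_finset_sum, Polynomial.eval_mul]

lemma det_toRat (P : Matrix ι ι (Polynomial F)) :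
    (toRat P).det = algebraMap (Polynomial F) (RatFunc F) P.det := by
  exact ((algebraMap (Polynomial F) (RatFunc F)).map_det P).symm

lemma det_polyEval (P : Matrix ι ι (Polynomial F)) (b : F) :
    (polyEval P b).det = P.det.eval b := by
  exact ((Polynomial.evalRingHom b).map_det P).symm

lemma adjugate_toRat (P : Matrix ι ι (Polynomial F)) :
    (toRat P).adjugate = toRat P.adjugate := by
  exact ((algebraMap (Polynomial F) (RatFunc F)).map_adjugate P).symm

lemma toRat_injective : Function.Injective (toRat : Matrix ι κ (Polynomial F) → _) := by
  intro A B h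
  have h' : ∀ i j, algebraMap (Polynomial F) (RatFunc F) (A i j) =
      algebraMap (Polynomial F) (RatFunc F) (B i j) := fun i j => congrFun (congrFun h i) j
  exact Matrix.ext fun i j => RatFunc.algebraMap_injective F (h' i j)

end Mat

section Rank

lemma rows_linearIndependent {p m : ℕ} {M : Matrix (Fin p) (Fin m) F} (h : M.rank = p) :
    LinearIndependent F (fun i => M i) := by
  rw [linearIndependent_iff_card_eq_finrank_span, Fintype.card_fin]
  rw [Matrix.rank_eq_finrank_span_row] at h
  exact h.symm

lemma isUnit_det_of_rank {n : ℕ} {M : Matrix (Fin n) (Fin n) F} (h : M.rank = n) :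
    IsUnit M.det :=
  (Matrix.isUnit_iff_isUnit_det M).mp (Matrix.linearIndependent_rows_iff_isUnit.mp
    (rows_linearIndependent h))

lemma exists_right_inv {p m : ℕ} {M : Matrix (Fin p) (Fin m) F} (h : M.rank = p) :
    ∃ V : Matrix (Fin m) (Fin p) F, M * V = 1 := by
  rw [← Matrix.mulVec_surjective_iff_exists_right_inverse]
  have h1 : LinearMap.range M.mulVecLin = ⊤ := by
    apply Submodule.eq_top_of_finrank_eq
    rw [Module.finrank_pi, Fintype.card_fin]
    exact h
  intro y
  obtain ⟨x, hx⟩ := LinearMap.range_eq_top.mp h1 y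
  exact ⟨x, hx⟩

end Rank

/-- Key definedness lemma: if `R = S * toRat T` with `T` everywhere full row rank and `R`
is defined at `a`, then `S` is defined at `a`. -/
lemma key {p m : ℕ} {T : Matrix (Fin p) (Fin m) (Polynomial F)}
    (hT1 : ∀ b : F, (polyEval T b).rank = p)
    {R : Matrix (Fin p) (Fin m) (RatFunc F)} {S : Matrix (Fin p) (Fin p) (RatFunc F)}
    (hfac : R = S * toRat T) (hRa : DefinedAt R a) : DefinedAt S a := by
  obtain ⟨V, hV⟩ := exists_right_inv (hT1 a)
  set Vp : Matrix (Fin m) (Fin p) (Polynomial F) := V.map Polynomial.C with hVp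
  set P : Matrix (Fin p) (Fin p) (Polynomial F) := T * Vp with hP
  have hVeval : polyEval Vp a = V := by
    ext i j; simp [polyEval, hVp, Matrix.map_apply]
  have hPeval : polyEval P a = 1 := by
    rw [hP, polyEval_mul, hVeval, hV]
  have hdet : P.det.eval a ≠ 0 := by
    rw [← det_polyEval, hPeval]
    simp
  have hSP : S * toRat P = R * toRat Vp := by
    rw [hfac, hP, toRat_mul, Matrix.mul_assoc]
  have hkey : algebraMap (Polynomial F) (RatFunc F) P.det • S =
      R * toRat Vp * toRat P.adjugate := by
    calc algebraMap (Polynomial F) (RatFunc F) P.det • S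
        = S * ((toRat P).det • (1 : Matrix (Fin p) (Fin p) (RatFunc F))) := by
          rw [det_toRat, Matrix.mul_smul, Matrix.mul_one]
      _ = S * (toRat P * (toRat P).adjugate) := by rw [Matrix.mul_adjugate]
      _ = S * toRat P * (toRat P).adjugate := by rw [Matrix.mul_assoc]
      _ = R * toRat Vp * toRat P.adjugate := by rw [hSP, adjugate_toRat]
  intro i j
  have hWdef : DefinedAt (R * toRat Vp * toRat P.adjugate) a :=
    (matdef_mul (matdef_mul hRa (matdef_toRat Vp).1).1 (matdef_toRat P.adjugate).1).1
  have hentry : algebraMap (Polynomial F) (RatFunc F) P.det * S i j =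
      (R * toRat Vp * toRat P.adjugate) i j := by
    rw [← hkey]; simp [Matrix.smul_apply, smul_eq_mul]
  exact rdef_div hdet (hWdef i j) hentry

end RMAux

namespace RMAux

open RM Polynomial

variable {F : Type*} [Field F] {a : F}

lemma eq_algebraMap_num {x : RatFunc F} (h : x.denom = 1) :
    x = algebraMap (Polynomial F) (RatFunc F) x.num := by
  conv_lhs => rw [← RatFunc.num_div_denom x]
  rw [h]
  simp

lemma denom_eq_one_of_defined [IsAlgClosed F] {x : RatFunc F}
    (h : ∀ b : F, RDefinedAt x b) : x.denom = 1 := by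
  have hmonic := RatFunc.monic_denom x
  by_contra hne
  have hdeg : x.denom.degree ≠ 0 := by
    intro h0
    exact hne (hmonic.degree_le_zero_iff_eq_one.mp h0.le)
  obtain ⟨b, hb⟩ := IsAlgClosed.exists_root x.denom hdeg
  exact h b hb

lemma deg_bound {p m : ℕ} {Sp : Matrix (Fin p) (Fin p) (Polynomial F)}
    {T : Matrix (Fin p) (Fin m) (Polynomial F)} {Rp : Matrix (Fin p) (Fin m) (Polynomial F)}
    (hfac : Rp = Sp * T) (hhrd : (hrdMat T).rank = p)
    (hRdeg : ∀ i k, (Rp i k).degree ≤ 1) :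
    ∀ i j, Sp i j ≠ 0 → (Sp i j).natDegree + rowDegM T j ≤ 1 := by
  classical
  intro i j hij
  have hrowle : ∀ (j' : Fin p) (k : Fin m), (T j' k).natDegree ≤ rowDegM T j' := by
    intro j' k
    unfold RM.rowDegM
    exact Finset.le_sup (f := fun k' => (T j' k').natDegree) (Finset.mem_univ k)
  have hne : Nonempty (Fin p) := ⟨i⟩
  set f : Fin p → ℕ := fun j' => if Sp i j' = 0 then 0 else (Sp i j').natDegree + rowDegM T j'
    with hf
  set D : ℕ := Finset.univ.sup f with hD
  have hfj : ∀ j', f j' ≤ D := fun j' => Finset.le_sup (Finset.mem_univ _)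
  have hDle : D ≤ 1 := by
    by_contra hgt
    push_neg at hgt
    obtain ⟨j₀, -, hj₀⟩ := Finset.exists_mem_eq_sup Finset.univ Finset.univ_nonempty f
    set v : Fin p → F := fun j' =>
      if Sp i j' ≠ 0 ∧ (Sp i j').natDegree + rowDegM T j' = D then (Sp i j').leadingCoeff else 0
      with hv
    have hC1 : ∀ j' k, (Sp i j' * T j' k).coeff D = v j' * hrdMat T j' k := by
      intro j' k
      by_cases hcond : Sp i j' ≠ 0 ∧ (Sp i j').natDegree + rowDegM T j' = D
      · obtain ⟨hnz, hdeq⟩ := hcond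
        by_cases hTz : T j' k = 0
        · simp [hv, hTz, hrdMat]
        · by_cases hdT : (T j' k).natDegree = rowDegM T j'
          · have hDeq : D = (Sp i j').natDegree + (T j' k).natDegree := by rw [hdT]; omega
            rw [hDeq, Polynomial.coeff_mul_degree_add_degree]
            have hv' : v j' = (Sp i j').leadingCoeff := by rw [hv]; simp [hnz, hdeq]
            have hh : hrdMat T j' k = (T j' k).leadingCoeff := by
              show (T j' k).coeff (rowDegM T j') = _
              rw [← hdT]
              rfl
            rw [hv', hh]
          · have hlt : (T j' k).natDegree < rowDegM T j' :=
              lt_of_le_of_ne (hrowle j' k) hdT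
            have hL : (Sp i j' * T j' k).coeff D = 0 := by
              apply Polynomial.coeff_eq_zero_of_natDegree_lt
              calc (Sp i j' * T j' k).natDegree
                  ≤ (Sp i j').natDegree + (T j' k).natDegree := Polynomial.natDegree_mul_le
                _ < (Sp i j').natDegree + rowDegM T j' := by omega
                _ = D := hdeq
            have hR : hrdMat T j' k = 0 := Polynomial.coeff_eq_zero_of_natDegree_lt hlt
            rw [hL, hR, mul_zero]
      · have hv' : v j' = 0 := by rw [hv]; simp only [if_neg hcond]
        rw [hv', zero_mul]
        by_cases hz : Sp i j' = 0
        · simp [hz]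
        · have h1 : (Sp i j').natDegree + rowDegM T j' ≤ D := by
            have := hfj j'
            rw [hf] at this
            simpa [hz] using this
          have h2 : (Sp i j').natDegree + rowDegM T j' ≠ D := fun h => hcond ⟨hz, h⟩
          apply Polynomial.coeff_eq_zero_of_natDegree_lt
          calc (Sp i j' * T j' k).natDegree
              ≤ (Sp i j').natDegree + (T j' k).natDegree := Polynomial.natDegree_mul_le
            _ ≤ (Sp i j').natDegree + rowDegM T j' := by
                have := hrowle j' k
                omega
            _ < D := by omega
    have hC2 : ∀ k, (Rp i k).coeff D = ∑ j', v j' * hrdMat T j' k := by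
      intro k
      rw [hfac]
      show ((Sp * T) i k).coeff D = _
      rw [Matrix.mul_apply, Polynomial.finset_sum_coeff]
      exact Finset.sum_congr rfl fun j' _ => hC1 j' k
    have hzero : ∀ k, (Rp i k).coeff D = 0 := by
      intro k
      apply Polynomial.coeff_eq_zero_of_degree_lt
      refine lt_of_le_of_lt (hRdeg i k) ?_
      exact_mod_cast hgt
    have hvec : ∀ k, ∑ j', v j' * hrdMat T j' k = 0 := fun k => (hC2 k).symm.trans (hzero k)
    have hli := rows_linearIndependent (F := F) hhrd
    have hv0 : ∀ j', v j' = 0 := by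
      apply Fintype.linearIndependent_iff.mp hli v
      funext k
      rw [Finset.sum_apply]
      simpa [smul_eq_mul] using hvec k
    have hfj₀ : f j₀ = D := by rw [hD]; exact hj₀.symm
    have hj₀ne : Sp i j₀ ≠ 0 := by
      intro h0
      have h1 : f j₀ = 0 := by rw [hf]; simp [h0]
      omega
    have hcond₀ : (Sp i j₀).natDegree + rowDegM T j₀ = D := by
      have h1 : f j₀ = (Sp i j₀).natDegree + rowDegM T j₀ := by rw [hf]; simp [hj₀ne]
      omega
    have hvj₀ : v j₀ = (Sp i j₀).leadingCoeff := by
      rw [hv]; simp [hj₀ne, hcond₀]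
    rw [hv0 j₀] at hvj₀
    exact hj₀ne (Polynomial.leadingCoeff_eq_zero.mp hvj₀.symm)
  have h1 : f j = (Sp i j).natDegree + rowDegM T j := by rw [hf]; simp [hij]
  have h2 := hfj j
  omega

end RMAux

/-- Let `R` be a rational matrix of full row normal rank and `T` a minimal
basis of the row space of `R`. Then: (a) there is a unique regular rational matrix `S` with
`R = S T`; (b) for any `Σ ⊆ F`, `R` has full row rank in `Σ` iff `S` is regular in `Σ`;
(c) `R` is a polynomial matrix iff `S` is; (d) if `R` is a matrix pencil then `S` and `T` are
matrix pencils. -/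
theorem minimalBasis_factorization {F : Type*} [Field F] [IsAlgClosed F] {p m : ℕ}
    (R : Matrix (Fin p) (Fin m) (RatFunc F)) (hR : R.rank = p)
    (T : Matrix (Fin p) (Fin m) (Polynomial F)) (hT : RM.IsMinimalBasis T)
    (hspan : Submodule.span (RatFunc F) (Set.range (RM.toRat T)) =
      Submodule.span (RatFunc F) (Set.range R)) :
    (∃! S : Matrix (Fin p) (Fin p) (RatFunc F), S.det ≠ 0 ∧ R = S * RM.toRat T) ∧
    (∀ S : Matrix (Fin p) (Fin p) (RatFunc F), S.det ≠ 0 → R = S * RM.toRat T →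
      ((∀ Sig : Set F, RM.FullRowRankOn R Sig ↔ RM.RegularOn S Sig) ∧
        (RM.IsPolyM R ↔ RM.IsPolyM S) ∧
        (RM.IsPencilM R → RM.IsPencilM S ∧ RM.IsPencilP T))) := by
  classical
  obtain ⟨hT1, hT2⟩ := hT
  -- evaluation identity helper
  have evfac : ∀ (S : Matrix (Fin p) (Fin p) (RatFunc F)), R = S * RM.toRat T →
      ∀ b : F, RM.DefinedAt S b → RM.matEval R b = RM.matEval S b * RM.polyEval T b := by
    intro S hfac b hSdef
    rw [hfac, (RMAux.matdef_mul hSdef (RMAux.matdef_toRat T).1).2, (RMAux.matdef_toRat T).2]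
  -- existence of S₀
  have hmem : ∀ i, R i ∈ Submodule.span (RatFunc F) (Set.range (RM.toRat T)) := by
    intro i
    rw [hspan]
    exact Submodule.subset_span (Set.mem_range_self i)
  choose c hc using fun i => (Submodule.mem_span_range_iff_exists_fun (RatFunc F)).mp (hmem i)
  set S₀ : Matrix (Fin p) (Fin p) (RatFunc F) := Matrix.of c with hS₀
  have hfac₀ : R = S₀ * RM.toRat T := by
    ext i k
    rw [Matrix.mul_apply]
    have h1 := congrFun (hc i) k
    rw [Finset.sum_apply] at h1
    simpa [smul_eq_mul, hS₀] using h1.symm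
  have hdet₀ : S₀.det ≠ 0 := by
    have h1 : p ≤ S₀.rank := by
      calc p = R.rank := hR.symm
        _ = (S₀ * RM.toRat T).rank := by rw [hfac₀]
        _ ≤ S₀.rank := Matrix.rank_mul_le_left _ _
    have h2 : S₀.rank = p := le_antisymm (Matrix.rank_le_width S₀) h1
    exact (RMAux.isUnit_det_of_rank h2).ne_zero
  have huniq : ∀ S' : Matrix (Fin p) (Fin p) (RatFunc F), R = S' * RM.toRat T → S' = S₀ := by
    intro S' hfac'
    obtain ⟨V, hV⟩ := RMAux.exists_right_inv (hT1 0)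
    set Vp : Matrix (Fin m) (Fin p) (Polynomial F) := V.map Polynomial.C with hVp
    set P : Matrix (Fin p) (Fin p) (Polynomial F) := T * Vp with hP
    have hVeval : RM.polyEval Vp 0 = V := by
      ext i' j'
      simp [RM.polyEval, hVp, Matrix.map_apply]
    have hPeval : RM.polyEval P 0 = 1 := by
      rw [hP, RMAux.polyEval_mul, hVeval, hV]
    have hPdet : P.det ≠ 0 := by
      intro h0
      have h1 : (RM.polyEval P 0).det = P.det.eval 0 := RMAux.det_polyEval P 0
      rw [hPeval, h0] at h1
      simp at h1
    have hPunit : IsUnit (RM.toRat P).det := by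
      rw [RMAux.det_toRat]
      exact (RatFunc.algebraMap_ne_zero hPdet).isUnit
    have hzero : (S' - S₀) * RM.toRat P = 0 := by
      rw [hP, RMAux.toRat_mul, ← Matrix.mul_assoc, Matrix.sub_mul, ← hfac₀, ← hfac', sub_self,
        Matrix.zero_mul]
    have h2 := congrArg (fun M => M * (RM.toRat P)⁻¹) hzero
    simp only [Matrix.mul_assoc, Matrix.mul_nonsing_inv _ hPunit, Matrix.mul_one,
      Matrix.zero_mul] at h2
    exact sub_eq_zero.mp h2
  refine ⟨⟨S₀, ⟨hdet₀, hfac₀⟩, fun S' h' => huniq S' h'.2⟩, ?_⟩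
  intro S hdet hfac
  -- part (c) first
  have hcIff : RM.IsPolyM R ↔ RM.IsPolyM S := by
    constructor
    · intro hRpoly i j
      have hdefall : ∀ b : F, RM.DefinedAt R b := by
        intro b i' j'
        show Polynomial.eval b (R i' j').denom ≠ 0
        rw [hRpoly i' j']
        simp
      have hS : ∀ b : F, RM.DefinedAt S b := fun b => RMAux.key hT1 hfac (hdefall b)
      exact RMAux.denom_eq_one_of_defined (fun b => hS b i j)
    · intro hSpoly i j
      have hSrat : RM.toRat (Matrix.of fun i' j' => (S i' j').num) = S := by
        ext i' j'
        exact (RMAux.eq_algebraMap_num (hSpoly i' j')).symm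
      have h1 : R = RM.toRat ((Matrix.of fun i' j' => (S i' j').num) * T) := by
        rw [RMAux.toRat_mul, hSrat]
        exact hfac
      have h2 : R i j = algebraMap (Polynomial F) (RatFunc F)
          (((Matrix.of fun i' j' => (S i' j').num) * T) i j) := by
        rw [h1]; rfl
      rw [h2, RatFunc.denom_algebraMap]
  refine ⟨?_, hcIff, ?_⟩
  -- part (b)
  · intro Sig
    constructor
    · intro hfull b hb
      obtain ⟨hdefR, hrank⟩ := hfull b hb
      have hSdef : RM.DefinedAt S b := RMAux.key hT1 hfac hdefR
      have hEv := evfac S hfac b hSdef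
      refine ⟨hSdef, ?_⟩
      have h1 : p ≤ (RM.matEval S b).rank := by
        calc p = (RM.matEval R b).rank := hrank.symm
          _ = (RM.matEval S b * RM.polyEval T b).rank := by rw [hEv]
          _ ≤ (RM.matEval S b).rank := Matrix.rank_mul_le_left _ _
      exact RMAux.isUnit_det_of_rank (le_antisymm (Matrix.rank_le_width _) h1)
    · intro hreg b hb
      obtain ⟨hSdef, hSunit⟩ := hreg b hb
      have hdefR : RM.DefinedAt R b := by
        rw [hfac]
        exact (RMAux.matdef_mul hSdef (RMAux.matdef_toRat T).1).1
      refine ⟨hdefR, ?_⟩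
      rw [evfac S hfac b hSdef, Matrix.rank_mul_eq_right_of_isUnit_det _ _ hSunit]
      exact hT1 b
  -- part (d)
  · intro hpencil
    have hRpoly : RM.IsPolyM R := fun i j => (hpencil i j).1
    have hSpoly : RM.IsPolyM S := hcIff.mp hRpoly
    set Sp : Matrix (Fin p) (Fin p) (Polynomial F) := Matrix.of fun i j => (S i j).num with hSpd
    set Rp : Matrix (Fin p) (Fin m) (Polynomial F) := Matrix.of fun i j => (R i j).num with hRpd
    have hSrat : RM.toRat Sp = S := by
      ext i' j'
      exact (RMAux.eq_algebraMap_num (hSpoly i' j')).symm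
    have hRrat : RM.toRat Rp = R := by
      ext i' j'
      exact (RMAux.eq_algebraMap_num (hRpoly i' j')).symm
    have hfacP : Rp = Sp * T := by
      apply RMAux.toRat_injective
      rw [RMAux.toRat_mul, hSrat, hRrat]
      exact hfac
    have hRdeg : ∀ i k, (Rp i k).degree ≤ 1 := fun i k => (hpencil i k).2
    have hstar := RMAux.deg_bound hfacP hT2 hRdeg
    have hSpdet : Sp.det ≠ 0 := by
      intro h0
      apply hdet
      rw [← hSrat, RMAux.det_toRat, h0]
      simp
    constructor
    · intro i j
      refine ⟨hSpoly i j, ?_⟩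
      show (Sp i j).degree ≤ 1
      by_cases hz : Sp i j = 0
      · rw [hz]
        simp
      · have h1 := hstar i j hz
        have hnd : (Sp i j).natDegree ≤ 1 := by omega
        calc (Sp i j).degree ≤ ((Sp i j).natDegree : WithBot ℕ) := Polynomial.degree_le_natDegree
          _ ≤ 1 := by exact_mod_cast hnd
    · intro j k
      have hcol : ∃ i, Sp i j ≠ 0 := by
        by_contra hnone
        push_neg at hnone
        exact hSpdet (Matrix.det_eq_zero_of_column_eq_zero j hnone)
      obtain ⟨i, hi⟩ := hcol
      have h1 := hstar i j hi
      have hnd : (T j k).natDegree ≤ 1 := by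
        have h2 : (T j k).natDegree ≤ RM.rowDegM T j := by
          unfold RM.rowDegM
          exact Finset.le_sup (f := fun k' => (T j k').natDegree) (Finset.mem_univ k)
        omega
      calc (T j k).degree ≤ ((T j k).natDegree : WithBot ℕ) := Polynomial.degree_le_natDegree
        _ ≤ 1 := by exact_mod_cast hnd
end

section
/- Let L(λ) = [[M(λ), K₂(λ)ᵀ], [K₁(λ), 0]] be a block full rank pencil of degree 1, with M(λ) of size p̂×m̂, K₁(λ) of size m₁×m̂ and K₂(λ) of size p₂×p̂, and let N₁(λ) ∈ F(λ)^{(m̂−m₁)×m̂} and N₂(λ) ∈ F(λ)^{(p̂−p₂)×p̂} be rational bases dual to K₁(λ) and K₂(λ), respectively. If for i = 1, 2 the pencil rev₁ K_i(λ) = λK_i(1/λ) has full row rank at 0, and there exist integers t₁, t₂ such that rev_{t_i} N_i(λ) = λ^{t_i}N_i(1/λ) has full row rank at 0, then rev L(λ) = λL(1/λ) is equivalent at 0 to diag(rev_{1+t₁+t₂} G(λ), I_{m₁+p₂}), where G(λ) = N₂(λ)M(λ)N₁(λ)ᵀ; that is, L(λ) is a linearization with empty state matrix of G(λ) at ∞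 of grade 1+t₁+t₂. -/
set_option synthInstance.maxHeartbeats 1000000
set_option maxHeartbeats 1000000

open Matrix

namespace RM

open Matrix Polynomial

variable {F : Type*} [Field F]

lemma rEval_eq_eval (x : RatFunc F) (a : F) :
    rEval x a = RatFunc.eval (RingHom.id F) a x := by
  simp only [rEval, RatFunc.eval, Polynomial.eval₂_id]

lemma rdef_algebraMap (p : Polynomial F) (a : F) :
    RDefinedAt (algebraMap (Polynomial F) (RatFunc F) p) a := by
  simp [RDefinedAt, RatFunc.denom_algebraMap]

lemma rEval_algebraMap (p : Polynomial F) (a : F) :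
    rEval (algebraMap (Polynomial F) (RatFunc F) p) a = p.eval a := by
  simp [rEval, RatFunc.num_algebraMap, RatFunc.denom_algebraMap]

lemma rdef_zero (a : F) : RDefinedAt (0 : RatFunc F) a := by
  simpa using rdef_algebraMap (F := F) 0 a

lemma rdef_one (a : F) : RDefinedAt (1 : RatFunc F) a := by
  simpa using rdef_algebraMap (F := F) 1 a

lemma rEval_zero (a : F) : rEval (0 : RatFunc F) a = 0 := by
  simpa using rEval_algebraMap (F := F) 0 a

lemma rEval_one (a : F) : rEval (1 : RatFunc F) a = 1 := by
  simpa using rEval_algebraMap (F := F) 1 a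

lemma eval₂_id_denom {x : RatFunc F} {a : F} (h : RDefinedAt x a) :
    Polynomial.eval₂ (RingHom.id F) a x.denom ≠ 0 := by
  exact h

lemma rdef_of_dvd {x : RatFunc F} {q : Polynomial F} {a : F}
    (hd : x.denom ∣ q) (hq : q.eval a ≠ 0) : RDefinedAt x a := by
  obtain ⟨c, rfl⟩ := hd
  intro h
  apply hq
  simp [Polynomial.eval_mul, h]

lemma rdef_add {x y : RatFunc F} {a : F} (hx : RDefinedAt x a) (hy : RDefinedAt y a) :
    RDefinedAt (x + y) a :=
  rdef_of_dvd (RatFunc.denom_add_dvd x y) (by simp [Polynomial.eval_mul]; exact ⟨hx, hy⟩)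

lemma rdef_mul {x y : RatFunc F} {a : F} (hx : RDefinedAt x a) (hy : RDefinedAt y a) :
    RDefinedAt (x * y) a :=
  rdef_of_dvd (RatFunc.denom_mul_dvd x y) (by simp [Polynomial.eval_mul]; exact ⟨hx, hy⟩)

lemma rdef_neg {x : RatFunc F} {a : F} (hx : RDefinedAt x a) : RDefinedAt (-x) a := by
  have : (-x) = (-1 : RatFunc F) * x := by ring
  rw [this]
  exact rdef_mul (by simpa using rdef_algebraMap (F := F) (-1) a) hx

lemma rEval_add {x y : RatFunc F} {a : F} (hx : RDefinedAt x a) (hy : RDefinedAt y a) :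
    rEval (x + y) a = rEval x a + rEval y a := by
  rw [rEval_eq_eval, rEval_eq_eval, rEval_eq_eval]
  exact RatFunc.eval_add _ _ (eval₂_id_denom hx) (eval₂_id_denom hy)

lemma rEval_mul {x y : RatFunc F} {a : F} (hx : RDefinedAt x a) (hy : RDefinedAt y a) :
    rEval (x * y) a = rEval x a * rEval y a := by
  rw [rEval_eq_eval, rEval_eq_eval, rEval_eq_eval]
  exact RatFunc.eval_mul _ _ (eval₂_id_denom hx) (eval₂_id_denom hy)

lemma rEval_neg {x : RatFunc F} {a : F} (hx : RDefinedAt x a) :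
    rEval (-x) a = - rEval x a := by
  have h1 : ((-1 : RatFunc F)) = algebraMap (Polynomial F) (RatFunc F) (-1) := by simp
  have : (-x) = (-1 : RatFunc F) * x := by ring
  rw [this, rEval_mul (by rw [h1]; exact rdef_algebraMap _ a) hx, h1, rEval_algebraMap]
  simp

lemma rdef_inv {x : RatFunc F} {a : F} (hx : RDefinedAt x a) (h0 : rEval x a ≠ 0) :
    RDefinedAt x⁻¹ a := by
  have hx0 : x ≠ 0 := by rintro rfl; exact h0 (rEval_zero a)
  have hinv : x⁻¹ = algebraMap (Polynomial F) (RatFunc F) x.denom /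
      algebraMap (Polynomial F) (RatFunc F) x.num := by
    conv_lhs => rw [← RatFunc.num_div_denom x]
    rw [inv_div]
  have hd : (x⁻¹).denom ∣ x.num := by
    rw [hinv]
    exact RatFunc.denom_div_dvd x.denom x.num
  have : x.num.eval a ≠ 0 := by
    intro h
    apply h0
    simp [rEval, h]
  exact rdef_of_dvd hd this

lemma rEval_inv {x : RatFunc F} {a : F} (hx : RDefinedAt x a) (h0 : rEval x a ≠ 0) :
    rEval x⁻¹ a = (rEval x a)⁻¹ := by
  have hx0 : x ≠ 0 := by rintro rfl; exact h0 (rEval_zero a)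
  have h := rEval_mul hx (rdef_inv hx h0)
  rw [mul_inv_cancel₀ hx0, rEval_one] at h
  exact (inv_eq_of_mul_eq_one_right h.symm).symm

lemma rdef_sum {s : Finset ι} (f : ι → RatFunc F) {a : F}
    (h : ∀ i ∈ s, RDefinedAt (f i) a) : RDefinedAt (∑ i ∈ s, f i) a := by
  classical
  induction s using Finset.cons_induction with
  | empty => simpa using rdef_zero a
  | cons i s hi ih =>
    rw [Finset.sum_cons]
    exact rdef_add (h i (Finset.mem_cons_self i s)) (ih fun j hj => h j (Finset.mem_cons_of_mem hj))

lemma rEval_sum {s : Finset ι} (f : ι → RatFunc F) {a : F}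
    (h : ∀ i ∈ s, RDefinedAt (f i) a) :
    rEval (∑ i ∈ s, f i) a = ∑ i ∈ s, rEval (f i) a := by
  classical
  induction s using Finset.cons_induction with
  | empty => simpa using rEval_zero a
  | cons i s hi ih =>
    rw [Finset.sum_cons, Finset.sum_cons,
      rEval_add (h i (Finset.mem_cons_self i s))
        (rdef_sum f fun j hj => h j (Finset.mem_cons_of_mem hj)),
      ih fun j hj => h j (Finset.mem_cons_of_mem hj)]

/-! ### The substitution homomorphism `λ ↦ 1/λ` -/

/-- Substitution of `X⁻¹` for `X`, as a ring hom on polynomials. -/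
noncomputable def ev₂Inv : Polynomial F →+* RatFunc F :=
  Polynomial.eval₂RingHom (algebraMap F (RatFunc F)) (RatFunc.X : RatFunc F)⁻¹

lemma reflect_sum {s : Finset ι} (f : ι → Polynomial F) (n : ℕ) :
    Polynomial.reflect n (∑ i ∈ s, f i) = ∑ i ∈ s, Polynomial.reflect n (f i) := by
  classical
  induction s using Finset.cons_induction with
  | empty => simp
  | cons i s hi ih => rw [Finset.sum_cons, Finset.sum_cons, Polynomial.reflect_add, ih]

lemma algebraMap_reflect {p : Polynomial F} {n : ℕ} (h : p.natDegree ≤ n) :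
    algebraMap (Polynomial F) (RatFunc F) (p.reflect n) =
      (RatFunc.X : RatFunc F) ^ n * ev₂Inv p := by
  conv_lhs => rw [p.as_sum_range' (n + 1) (Nat.lt_succ_of_le h)]
  rw [reflect_sum, map_sum]
  conv_rhs => rw [p.as_sum_range' (n + 1) (Nat.lt_succ_of_le h), map_sum, Finset.mul_sum]
  refine Finset.sum_congr rfl fun i hi => ?_
  have hin : i ≤ n := Nat.lt_succ_iff.mp (Finset.mem_range.mp hi)
  rw [← Polynomial.C_mul_X_pow_eq_monomial, Polynomial.reflect_C_mul,
    Polynomial.reflect_monomial, Polynomial.revAt_le hin]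
  rw [_root_.map_mul, _root_.map_mul, map_pow, map_pow]
  have hX : (algebraMap (Polynomial F) (RatFunc F)) Polynomial.X = RatFunc.X := rfl
  have hc : ev₂Inv (Polynomial.C (p.coeff i)) =
      algebraMap (Polynomial F) (RatFunc F) (Polynomial.C (p.coeff i)) := by
    simp [ev₂Inv, RatFunc.algebraMap_C, RatFunc.algebraMap_eq_C]
  have hx2 : ev₂Inv (Polynomial.X : Polynomial F) = (RatFunc.X : RatFunc F)⁻¹ := by
    simp [ev₂Inv]
  rw [hc, hx2, hX]
  have hXne : (RatFunc.X : RatFunc F) ≠ 0 := RatFunc.X_ne_zero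
  have hpow : (RatFunc.X : RatFunc F) ^ n * ((RatFunc.X : RatFunc F)⁻¹) ^ i
      = (RatFunc.X : RatFunc F) ^ (n - i) := by
    rw [← Nat.sub_add_cancel hin, pow_add]
    rw [Nat.add_sub_cancel, mul_assoc, ← mul_pow, mul_inv_cancel₀ hXne, one_pow, mul_one]
  rw [← hpow]
  ring

lemma ev₂Inv_injective : Function.Injective (ev₂Inv (F := F)) := by
  intro p q hpq
  by_contra hne
  have hsub : p - q ≠ 0 := sub_ne_zero.mpr hne
  have h : ev₂Inv (p - q) = 0 := by rw [map_sub, hpq, sub_self]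
  have h2 := algebraMap_reflect (p := p - q) (n := (p - q).natDegree) le_rfl
  rw [h, mul_zero] at h2
  have hz : (p - q).reflect (p - q).natDegree = 0 :=
    (map_eq_zero_iff _ (IsFractionRing.injective (Polynomial F) (RatFunc F))).mp h2
  rw [← Polynomial.reverse] at hz
  exact hsub (Polynomial.reverse_eq_zero.mp hz)

/-- The field homomorphism `x(λ) ↦ x(1/λ)` on rational functions. -/
noncomputable def invSubst : RatFunc F →+* RatFunc F :=
  IsFractionRing.lift (ev₂Inv_injective (F := F))

lemma invSubst_algebraMap (p : Polynomial F) :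
    invSubst (algebraMap (Polynomial F) (RatFunc F) p) = ev₂Inv p :=
  IsFractionRing.lift_algebraMap _ _

lemma rAtInv_eq_invSubst (x : RatFunc F) : rAtInv x = invSubst x := by
  have : x = algebraMap (Polynomial F) (RatFunc F) x.num /
      algebraMap (Polynomial F) (RatFunc F) x.denom := (RatFunc.num_div_denom x).symm
  conv_rhs => rw [this]
  rw [map_div₀, invSubst_algebraMap, invSubst_algebraMap]
  rfl

lemma rRev_eq (g : ℤ) (x : RatFunc F) :
    rRev g x = (RatFunc.X : RatFunc F) ^ g * invSubst x := by
  rw [rRev, rAtInv_eq_invSubst]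

lemma rRev_mul (a b : ℤ) (x y : RatFunc F) :
    rRev a x * rRev b y = rRev (a + b) (x * y) := by
  rw [rRev_eq, rRev_eq, rRev_eq, _root_.map_mul, zpow_add₀ (RatFunc.X_ne_zero (K := F))]
  ring

lemma rRev_zero (g : ℤ) : rRev g (0 : RatFunc F) = 0 := by
  rw [rRev_eq, map_zero, mul_zero]

lemma rRev_sum (g : ℤ) {s : Finset ι} (f : ι → RatFunc F) :
    rRev g (∑ i ∈ s, f i) = ∑ i ∈ s, rRev g (f i) := by
  rw [rRev_eq, map_sum, Finset.mul_sum]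
  exact Finset.sum_congr rfl fun i _ => (rRev_eq g (f i)).symm

end RM

set_option linter.unusedSectionVars false
namespace RM

open Matrix Polynomial

variable {F : Type*} [Field F]

/-- The local ring of rational functions defined at `a`. -/
noncomputable def defSubring (a : F) : Subring (RatFunc F) where
  carrier := {x | RDefinedAt x a}
  mul_mem' := fun hx hy => rdef_mul hx hy
  one_mem' := rdef_one a
  add_mem' := fun hx hy => rdef_add hx hy
  zero_mem' := rdef_zero a
  neg_mem' := fun hx => rdef_neg hx

/-- Evaluation at `a` as a ring hom on the local ring at `a`. -/
noncomputable def evalHom (a : F) : defSubring (F := F) a →+* F where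
  toFun x := rEval x.1 a
  map_one' := rEval_one a
  map_mul' x y := rEval_mul x.2 y.2
  map_zero' := rEval_zero a
  map_add' x y := rEval_add x.2 y.2

section MatrixLayer

variable {ι κ μ : Type*} [Fintype ι] [Fintype κ] [Fintype μ]
  [DecidableEq ι] [DecidableEq κ] [DecidableEq μ] {a : F}

/-- Lift a defined matrix to the local ring at `a`. -/
noncomputable def liftM (R : Matrix ι κ (RatFunc F)) (h : DefinedAt R a) :
    Matrix ι κ (defSubring (F := F) a) := fun i j => ⟨R i j, h i j⟩

lemma liftM_val (R : Matrix ι κ (RatFunc F)) (h : DefinedAt R a) :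
    (liftM R h).map (Subring.subtype _) = R := rfl

lemma liftM_eval (R : Matrix ι κ (RatFunc F)) (h : DefinedAt R a) :
    (liftM R h).map (evalHom a) = matEval R a := rfl

lemma definedAt_of_val (R' : Matrix ι κ (defSubring (F := F) a)) :
    DefinedAt (R'.map (Subring.subtype _)) a := fun i j => (R' i j).2

lemma definedAt_mul {A : Matrix ι κ (RatFunc F)} {B : Matrix κ μ (RatFunc F)}
    (hA : DefinedAt A a) (hB : DefinedAt B a) : DefinedAt (A * B) a := by
  have : A * B = ((liftM A hA * liftM B hB).map (Subring.subtype _)) := by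
    rw [Matrix.map_mul, liftM_val, liftM_val]
  rw [this]
  exact definedAt_of_val _

lemma matEval_mul {A : Matrix ι κ (RatFunc F)} {B : Matrix κ μ (RatFunc F)}
    (hA : DefinedAt A a) (hB : DefinedAt B a) :
    matEval (A * B) a = matEval A a * matEval B a := by
  have h1 : A * B = ((liftM A hA * liftM B hB).map (Subring.subtype _)) := by
    rw [Matrix.map_mul, liftM_val, liftM_val]
  have h2 : matEval (A * B) a = (liftM A hA * liftM B hB).map (evalHom a) := by
    rw [h1]; rfl
  rw [h2, Matrix.map_mul, liftM_eval, liftM_eval]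

lemma definedAt_one : DefinedAt (1 : Matrix ι ι (RatFunc F)) a := by
  intro i j
  by_cases h : i = j
  · subst h; simpa [Matrix.one_apply_eq] using rdef_one a
  · simpa [Matrix.one_apply_ne h] using rdef_zero a

lemma matEval_one : matEval (1 : Matrix ι ι (RatFunc F)) a = 1 := by
  ext i j
  by_cases h : i = j
  · subst h; simp [matEval, Matrix.one_apply_eq, rEval_one]
  · simp [matEval, Matrix.one_apply_ne h, rEval_zero]

lemma definedAt_zero : DefinedAt (0 : Matrix ι κ (RatFunc F)) a := fun _ _ => rdef_zero a

lemma matEval_zero : matEval (0 : Matrix ι κ (RatFunc F)) a = 0 := by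
  ext i j; simp [matEval, rEval_zero]

lemma definedAt_transpose {A : Matrix ι κ (RatFunc F)} (hA : DefinedAt A a) :
    DefinedAt Aᵀ a := fun i j => hA j i

lemma matEval_transpose (A : Matrix ι κ (RatFunc F)) :
    matEval Aᵀ a = (matEval A a)ᵀ := rfl

lemma definedAt_submatrix {ι' κ' : Type*} [Fintype ι'] [Fintype κ'] [DecidableEq ι']
    [DecidableEq κ'] {A : Matrix ι κ (RatFunc F)} (hA : DefinedAt A a)
    (f : ι' → ι) (g : κ' → κ) : DefinedAt (A.submatrix f g) a := fun i j => hA (f i) (g j)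

lemma matEval_submatrix {ι' κ' : Type*} [Fintype ι'] [Fintype κ'] [DecidableEq ι']
    [DecidableEq κ'] (A : Matrix ι κ (RatFunc F)) (f : ι' → ι) (g : κ' → κ) :
    matEval (A.submatrix f g) a = (matEval A a).submatrix f g := rfl

lemma definedAt_neg {A : Matrix ι κ (RatFunc F)} (hA : DefinedAt A a) :
    DefinedAt (-A) a := fun i j => rdef_neg (hA i j)

lemma rdef_det {R : Matrix ι ι (RatFunc F)} (h : DefinedAt R a) : RDefinedAt R.det a := by
  have : R.det = (Subring.subtype _) (liftM R h).det := by
    rw [RingHom.map_det, RingHom.mapMatrix_apply, liftM_val]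
  rw [this]
  exact ((liftM R h).det).2

lemma rEval_det {R : Matrix ι ι (RatFunc F)} (h : DefinedAt R a) :
    rEval R.det a = (matEval R a).det := by
  have h1 : R.det = (Subring.subtype _) (liftM R h).det := by
    rw [RingHom.map_det, RingHom.mapMatrix_apply, liftM_val]
  have h2 : rEval R.det a = (evalHom a) (liftM R h).det := by rw [h1]; rfl
  rw [h2, RingHom.map_det, RingHom.mapMatrix_apply, liftM_eval]

lemma regularAt_mul {A B : Matrix ι ι (RatFunc F)} (hA : RegularAt A a)
    (hB : RegularAt B a) : RegularAt (A * B) a := by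
  refine ⟨definedAt_mul hA.1 hB.1, ?_⟩
  rw [matEval_mul hA.1 hB.1, Matrix.det_mul]
  exact hA.2.mul hB.2

lemma det_ne_zero_of_regular {R : Matrix ι ι (RatFunc F)} (h : RegularAt R a) :
    IsUnit R.det := by
  rw [isUnit_iff_ne_zero]
  intro h0
  have hh := rEval_det h.1
  rw [h0, rEval_zero] at hh
  exact h.2.ne_zero hh.symm

lemma definedAt_inv {R : Matrix ι ι (RatFunc F)} (h : RegularAt R a) :
    DefinedAt R⁻¹ a ∧ matEval R⁻¹ a = (matEval R a)⁻¹ := by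
  have hdet : IsUnit R.det := det_ne_zero_of_regular h
  have hdne : R.det ≠ 0 := hdet.ne_zero
  have hval : rEval R.det a = (matEval R a).det := rEval_det h.1
  have hvne : rEval R.det a ≠ 0 := by
    rw [hval]; exact h.2.ne_zero
  have hadj : DefinedAt R.adjugate a := by
    have : R.adjugate = ((liftM R h.1).adjugate).map (Subring.subtype _) := by
      have := RingHom.map_adjugate ((defSubring (F := F) a).subtype) (liftM R h.1)
      rw [RingHom.mapMatrix_apply, RingHom.mapMatrix_apply, liftM_val] at this
      rw [this]
    rw [this]
    exact definedAt_of_val _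
  have hinv : R⁻¹ = R.det⁻¹ • R.adjugate := by
    rw [Matrix.inv_def, Ring.inverse_eq_inv']
  have hdefinv : DefinedAt R⁻¹ a := by
    rw [hinv]
    intro i j
    simp only [Matrix.smul_apply, smul_eq_mul]
    exact rdef_mul (rdef_inv (rdef_det h.1) hvne) (hadj i j)
  refine ⟨hdefinv, ?_⟩
  have hmul : R * R⁻¹ = 1 := Matrix.mul_nonsing_inv R hdet
  have := matEval_mul h.1 hdefinv
  rw [hmul, matEval_one] at this
  exact (Matrix.inv_eq_right_inv this.symm).symm

end MatrixLayer

end RM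

set_option linter.unusedSectionVars false

namespace RM

open Matrix Polynomial

variable {F : Type*} [Field F]

section RevLayer

variable {ι κ μ : Type*} [Fintype ι] [Fintype κ] [Fintype μ]
  [DecidableEq ι] [DecidableEq κ] [DecidableEq μ]

lemma matRev_mul (a b : ℤ) (A : Matrix ι κ (RatFunc F)) (B : Matrix κ μ (RatFunc F)) :
    matRev a A * matRev b B = matRev (a + b) (A * B) := by
  ext i j
  rw [Matrix.mul_apply]
  show ∑ k, rRev a (A i k) * rRev b (B k j) = rRev (a + b) ((A * B) i j)
  rw [Matrix.mul_apply, rRev_sum]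
  exact Finset.sum_congr rfl fun k _ => rRev_mul a b _ _

lemma matRev_transpose (g : ℤ) (A : Matrix ι κ (RatFunc F)) :
    (matRev g A)ᵀ = matRev g Aᵀ := rfl

lemma matRev_zero (g : ℤ) : matRev g (0 : Matrix ι κ (RatFunc F)) = 0 := by
  ext i j
  exact rRev_zero g

lemma toRat_polyRev {P : Matrix ι κ (Polynomial F)} {d : ℕ}
    (h : ∀ i j, (P i j).natDegree ≤ d) :
    toRat (polyRev d P) = matRev (d : ℤ) (toRat P) := by
  ext i j
  show algebraMap (Polynomial F) (RatFunc F) ((P i j).reflect d) = rRev (d : ℤ) _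
  rw [algebraMap_reflect (h i j), rRev_eq, zpow_natCast]
  congr 1
  show ev₂Inv (P i j) = invSubst (algebraMap (Polynomial F) (RatFunc F) (P i j))
  rw [invSubst_algebraMap]

end RevLayer

section FieldLinAlg

variable {r c n h : ℕ}

lemma exists_rightInverse_of_rank (A : Matrix (Fin r) (Fin c) F) (hA : A.rank = r) :
    ∃ B : Matrix (Fin c) (Fin r) F, A * B = 1 := by
  have hsurj : LinearMap.range (Matrix.mulVecLin A) = ⊤ := by
    apply Submodule.eq_top_of_finrank_eq
    rw [← Matrix.rank, hA, Module.finrank_fin_fun]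
  obtain ⟨g, hg⟩ := (Matrix.mulVecLin A).exists_rightInverse_of_surjective hsurj
  refine ⟨LinearMap.toMatrix' g, ?_⟩
  have : Matrix.mulVecLin (A * LinearMap.toMatrix' g) = LinearMap.id := by
    rw [Matrix.mulVecLin_mul]
    simp only [← Matrix.toLin'_apply']
    rw [Matrix.toLin'_toMatrix']
    simp only [← Matrix.toLin'_apply'] at hg
    exact hg
  have h2 := congrArg LinearMap.toMatrix' this
  simp only [← Matrix.toLin'_apply', LinearMap.toMatrix'_toLin'] at h2
  rwa [LinearMap.toMatrix'_id] at h2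

lemma mulVec_eq_zero_of_rank (N : Matrix (Fin n) (Fin h) F) (hr : N.rank = n)
    (x : Fin n → F) (hx : Nᵀ.mulVec x = 0) : x = 0 := by
  have hrt : (Nᵀ).rank = n := by rw [Matrix.rank_transpose]; exact hr
  have hker : LinearMap.ker (Matrix.mulVecLin Nᵀ) = ⊥ := by
    have h1 := LinearMap.finrank_range_add_finrank_ker (Matrix.mulVecLin Nᵀ)
    rw [← Matrix.rank, hrt, Module.finrank_fin_fun] at h1
    have h0 : Module.finrank F ↥(LinearMap.ker (Matrix.mulVecLin Nᵀ)) = 0 := by omega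
    exact Submodule.finrank_eq_zero.mp h0
  have : x ∈ LinearMap.ker (Matrix.mulVecLin Nᵀ) := by
    simpa [Matrix.mulVecLin, Matrix.mulVec_transpose] using hx
  rw [hker] at this
  simpa using this

end FieldLinAlg

section RightInv

variable {p m : ℕ} {a : F}

/-- A rational matrix with full row rank at `a` has a rational right inverse defined at `a`
whose evaluation is a right inverse of the evaluation. -/
lemma exists_ratRightInverse {K : Matrix (Fin p) (Fin m) (RatFunc F)}
    (h : FullRowRankAt K a) :
    ∃ R : Matrix (Fin m) (Fin p) (RatFunc F),
      DefinedAt R a ∧ K * R = 1 ∧ matEval K a * matEval R a = 1 := by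
  obtain ⟨B₀, hB₀⟩ := exists_rightInverse_of_rank (matEval K a) h.2
  set Bc : Matrix (Fin m) (Fin p) (RatFunc F) :=
    fun i j => algebraMap (Polynomial F) (RatFunc F) (Polynomial.C (B₀ i j)) with hBc
  have hBcDef : DefinedAt Bc a := fun i j => rdef_algebraMap _ a
  have hBcEval : matEval Bc a = B₀ := by
    ext i j
    show rEval (algebraMap (Polynomial F) (RatFunc F) (Polynomial.C (B₀ i j))) a = B₀ i j
    rw [rEval_algebraMap, Polynomial.eval_C]
  set Q := K * Bc with hQ
  have hQDef : DefinedAt Q a := definedAt_mul h.1 hBcDef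
  have hQEval : matEval Q a = 1 := by rw [hQ, matEval_mul h.1 hBcDef, hBcEval, hB₀]
  have hQreg : RegularAt Q a := ⟨hQDef, by rw [hQEval]; simp⟩
  have hQdet : IsUnit Q.det := det_ne_zero_of_regular hQreg
  obtain ⟨hQinvDef, hQinvEval⟩ := definedAt_inv hQreg
  refine ⟨Bc * Q⁻¹, definedAt_mul hBcDef hQinvDef, ?_, ?_⟩
  · rw [← Matrix.mul_assoc, ← hQ, Matrix.mul_nonsing_inv Q hQdet]
  · rw [matEval_mul hBcDef hQinvDef, hQinvEval, hQEval, ← Matrix.mul_assoc]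
    rw [← matEval_mul h.1 hBcDef, ← hQ, hQEval]
    simp

end RightInv

section EquivLayer

variable {ι κ ι' κ' : Type*} [Fintype ι] [Fintype κ] [Fintype ι'] [Fintype κ']
  [DecidableEq ι] [DecidableEq κ] [DecidableEq ι'] [DecidableEq κ'] {a : F}

lemma equivAt_submatrix {G H : Matrix ι κ (RatFunc F)} (e : ι' ≃ ι) (f : κ' ≃ κ)
    (h : EquivAt G H a) : EquivAt (G.submatrix e f) (H.submatrix e f) a := by
  obtain ⟨R₁, R₂, hR₁, hR₂, hE⟩ := h
  refine ⟨R₁.submatrix e e, R₂.submatrix f f, ?_, ?_, ?_⟩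
  · refine ⟨definedAt_submatrix hR₁.1 _ _, ?_⟩
    rw [matEval_submatrix, Matrix.det_submatrix_equiv_self]
    exact hR₁.2
  · refine ⟨definedAt_submatrix hR₂.1 _ _, ?_⟩
    rw [matEval_submatrix, Matrix.det_submatrix_equiv_self]
    exact hR₂.2
  · rw [Matrix.submatrix_mul_equiv R₁ G ⇑e e ⇑f, Matrix.submatrix_mul_equiv (R₁ * G) R₂ ⇑e f ⇑f,
      hE]

end EquivLayer

end RM

namespace RM

open Matrix Polynomial

variable {F : Type*} [Field F]

section Blocks

variable {ι₁ ι₂ κ₁ κ₂ : Type*} [Fintype ι₁] [Fintype ι₂] [Fintype κ₁] [Fintype κ₂]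
  [DecidableEq ι₁] [DecidableEq ι₂] [DecidableEq κ₁] [DecidableEq κ₂] {a : F}

lemma definedAt_fromBlocks {A : Matrix ι₁ κ₁ (RatFunc F)} {B : Matrix ι₁ κ₂ (RatFunc F)}
    {C : Matrix ι₂ κ₁ (RatFunc F)} {D : Matrix ι₂ κ₂ (RatFunc F)}
    (hA : DefinedAt A a) (hB : DefinedAt B a) (hC : DefinedAt C a) (hD : DefinedAt D a) :
    DefinedAt (fromBlocks A B C D) a := by
  rintro (i | i) (j | j)
  · exact hA i j
  · exact hB i j
  · exact hC i j
  · exact hD i j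

lemma matEval_fromBlocks (A : Matrix ι₁ κ₁ (RatFunc F)) (B : Matrix ι₁ κ₂ (RatFunc F))
    (C : Matrix ι₂ κ₁ (RatFunc F)) (D : Matrix ι₂ κ₂ (RatFunc F)) :
    matEval (fromBlocks A B C D) a =
      fromBlocks (matEval A a) (matEval B a) (matEval C a) (matEval D a) := by
  ext (i | i) (j | j) <;> rfl

lemma definedAt_fromRows {A : Matrix ι₁ κ₁ (RatFunc F)} {B : Matrix ι₂ κ₁ (RatFunc F)}
    (hA : DefinedAt A a) (hB : DefinedAt B a) : DefinedAt (fromRows A B) a := by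
  rintro (i | i) j
  · exact hA i j
  · exact hB i j

lemma matEval_fromRows (A : Matrix ι₁ κ₁ (RatFunc F)) (B : Matrix ι₂ κ₁ (RatFunc F)) :
    matEval (fromRows A B) a = fromRows (matEval A a) (matEval B a) := by
  ext (i | i) j <;> rfl

lemma definedAt_fromColumns {A : Matrix ι₁ κ₁ (RatFunc F)} {B : Matrix ι₁ κ₂ (RatFunc F)}
    (hA : DefinedAt A a) (hB : DefinedAt B a) : DefinedAt (fromCols A B) a := by
  rintro i (j | j)
  · exact hA i j
  · exact hB i j

lemma matEval_fromColumns (A : Matrix ι₁ κ₁ (RatFunc F)) (B : Matrix ι₁ κ₂ (RatFunc F)) :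
    matEval (fromCols A B) a = fromCols (matEval A a) (matEval B a) := by
  ext i (j | j) <;> rfl

end Blocks

section KernelArg

variable {hh n p : ℕ}

lemma colBlock_inj {K' : Matrix (Fin p) (Fin hh) (RatFunc F)}
    {N' : Matrix (Fin n) (Fin hh) (RatFunc F)} {R : Matrix (Fin hh) (Fin p) (RatFunc F)}
    (hKdef : DefinedAt K' 0) (hNdef : DefinedAt N' 0) (hRdef : DefinedAt R 0)
    (hrk : (matEval N' (0 : F)).rank = n) (hdual : K' * N'ᵀ = 0)
    (hKR : matEval K' (0 : F) * matEval R 0 = 1) (x : Fin n → F) (y : Fin p → F)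
    (hxy : (matEval N' (0 : F))ᵀ.mulVec x + (matEval R (0 : F)).mulVec y = 0) :
    x = 0 ∧ y = 0 := by
  have hKN : matEval K' (0 : F) * (matEval N' 0)ᵀ = 0 := by
    rw [← matEval_transpose, ← matEval_mul hKdef (definedAt_transpose hNdef), hdual, matEval_zero]
  have h1 : (matEval K' (0 : F)).mulVec ((matEval N' (0:F))ᵀ.mulVec x +
      (matEval R (0:F)).mulVec y) = 0 := by rw [hxy, Matrix.mulVec_zero]
  rw [Matrix.mulVec_add, Matrix.mulVec_mulVec, Matrix.mulVec_mulVec, hKN, hKR,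
    Matrix.zero_mulVec, Matrix.one_mulVec, zero_add] at h1
  subst h1
  rw [Matrix.mulVec_zero, add_zero] at hxy
  exact ⟨mulVec_eq_zero_of_rank _ hrk x hxy, rfl⟩

end KernelArg

end RM

set_option linter.unusedSectionVars false

namespace RM

open Matrix Polynomial

variable {F : Type*} [Field F]

/-- Core local equivalence for block full rank pencils, at `0`, in block-sum form. -/
lemma core_blockEquiv {phat mhat m1 p2 n1 n2 : ℕ}
    (M' : Matrix (Fin phat) (Fin mhat) (RatFunc F))
    (K1' : Matrix (Fin m1) (Fin mhat) (RatFunc F))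
    (K2' : Matrix (Fin p2) (Fin phat) (RatFunc F))
    (N1' : Matrix (Fin n1) (Fin mhat) (RatFunc F))
    (N2' : Matrix (Fin n2) (Fin phat) (RatFunc F))
    (hM'def : DefinedAt M' (0 : F))
    (hK1 : FullRowRankAt K1' 0) (hK2 : FullRowRankAt K2' 0)
    (hN1 : FullRowRankAt N1' 0) (hN2 : FullRowRankAt N2' 0)
    (hd1 : K1' * N1'ᵀ = 0) (hd2 : K2' * N2'ᵀ = 0)
    (σeq : (Fin phat ⊕ Fin m1) ≃ (Fin n2 ⊕ Fin (m1 + p2)))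
    (τeq : (Fin mhat ⊕ Fin p2) ≃ (Fin n1 ⊕ Fin (m1 + p2))) :
    EquivAt (fromBlocks M' K2'ᵀ K1' 0)
      ((fromBlocks (N2' * M' * N1'ᵀ) 0 0
          (1 : Matrix (Fin (m1 + p2)) (Fin (m1 + p2)) (RatFunc F))).submatrix σeq τeq)
      (0 : F) := by
  classical
  obtain ⟨R1, hR1def, hK1R1, hK1R1e⟩ := exists_ratRightInverse hK1
  obtain ⟨R2, hR2def, hK2R2, hK2R2e⟩ := exists_ratRightInverse hK2
  set Xp : Matrix (Fin phat ⊕ Fin m1) (Fin mhat ⊕ Fin p2) (RatFunc F) :=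
    fromBlocks M' K2'ᵀ K1' 0 with hXp
  set W : Matrix (Fin n2 ⊕ Fin p2) (Fin phat) (RatFunc F) := fromRows N2' R2ᵀ with hW
  set V : Matrix (Fin mhat) (Fin n1 ⊕ Fin m1) (RatFunc F) := fromCols N1'ᵀ R1 with hV
  set A : Matrix ((Fin n2 ⊕ Fin p2) ⊕ Fin m1) (Fin phat ⊕ Fin m1) (RatFunc F) :=
    fromBlocks W 0 0 1 with hA
  set B : Matrix (Fin mhat ⊕ Fin p2) ((Fin n1 ⊕ Fin m1) ⊕ Fin p2) (RatFunc F) :=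
    fromBlocks V 0 0 1 with hB
  set G' := N2' * M' * N1'ᵀ with hG'
  set X2 := N2' * M' * R1 with hX2
  set Y2 := R2ᵀ * M' * N1'ᵀ with hY2
  set Z2 := R2ᵀ * M' * R1 with hZ2
  set E1 : Matrix ((Fin n2 ⊕ Fin p2) ⊕ Fin m1) ((Fin n2 ⊕ Fin p2) ⊕ Fin m1) (RatFunc F) :=
    fromBlocks 1 (fromRows (-X2) (-Z2)) 0 1 with hE1
  set E2 : Matrix ((Fin n1 ⊕ Fin m1) ⊕ Fin p2) ((Fin n1 ⊕ Fin m1) ⊕ Fin p2) (RatFunc F) :=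
    fromBlocks 1 0 (fromCols (-Y2) 0) 1 with hE2
  set D0 : Matrix ((Fin n2 ⊕ Fin p2) ⊕ Fin m1) ((Fin n1 ⊕ Fin m1) ⊕ Fin p2) (RatFunc F) :=
    fromBlocks (fromBlocks G' 0 0 0) (fromRows 0 1) (fromCols 0 1) 0 with hD0def
  set σ0eq : ((Fin n2 ⊕ Fin p2) ⊕ Fin m1) ≃ (Fin n2 ⊕ Fin (m1 + p2)) :=
    (Equiv.sumAssoc (Fin n2) (Fin p2) (Fin m1)).trans
      (Equiv.sumCongr (Equiv.refl (Fin n2))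
        ((Equiv.sumComm (Fin p2) (Fin m1)).trans finSumFinEquiv)) with hσ0
  set τ0eq : ((Fin n1 ⊕ Fin m1) ⊕ Fin p2) ≃ (Fin n1 ⊕ Fin (m1 + p2)) :=
    (Equiv.sumAssoc (Fin n1) (Fin m1) (Fin p2)).trans
      (Equiv.sumCongr (Equiv.refl (Fin n1)) finSumFinEquiv) with hτ0
  set er := σeq.trans σ0eq.symm with her
  set ec := τeq.trans τ0eq.symm with hec
  -- the block computation
  have hWK2 : W * K2'ᵀ = fromRows 0 1 := by
    have e1 : N2' * K2'ᵀ = 0 := by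
      rw [show N2' * K2'ᵀ = (K2' * N2'ᵀ)ᵀ by
        rw [Matrix.transpose_mul, Matrix.transpose_transpose], hd2, Matrix.transpose_zero]
    rw [hW, Matrix.fromRows_mul, e1, ← Matrix.transpose_mul, hK2R2, Matrix.transpose_one]
  have hK1V : K1' * V = fromCols 0 1 := by
    rw [hV, Matrix.mul_fromCols, hd1, hK1R1]
  have hWMV : W * M' * V = fromBlocks G' X2 Y2 Z2 := by
    rw [hW, hV, Matrix.fromRows_mul, Matrix.fromRows_mul, Matrix.mul_fromCols,
      Matrix.mul_fromCols, Matrix.fromRows_fromCols_eq_fromBlocks]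
  have hAXB : A * Xp * B =
      fromBlocks (fromBlocks G' X2 Y2 Z2) (fromRows 0 1) (fromCols 0 1) 0 := by
    rw [hA, hXp, hB, Matrix.fromBlocks_multiply, Matrix.fromBlocks_multiply]
    simp only [Matrix.one_mul, Matrix.mul_one, Matrix.zero_mul, Matrix.mul_zero, add_zero,
      zero_add]
    rw [hWMV, hWK2, hK1V]
  have hE1T : E1 * (fromBlocks (fromBlocks G' X2 Y2 Z2) (fromRows 0 1) (fromCols 0 1)
      (0 : Matrix (Fin m1) (Fin p2) (RatFunc F))) =
      fromBlocks (fromBlocks G' 0 Y2 0) (fromRows 0 1) (fromCols 0 1) 0 := by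
    rw [hE1, Matrix.fromBlocks_multiply]
    simp only [Matrix.one_mul, Matrix.mul_one, Matrix.zero_mul, Matrix.mul_zero, add_zero,
      zero_add]
    have hblk : fromBlocks G' X2 Y2 Z2 + fromRows (-X2) (-Z2) *
        (fromCols 0 1 : Matrix (Fin m1) (Fin n1 ⊕ Fin m1) (RatFunc F)) =
        fromBlocks G' 0 Y2 0 := by
      rw [Matrix.fromRows_mul, Matrix.mul_fromCols, Matrix.mul_fromCols,
        Matrix.mul_zero, Matrix.mul_zero, Matrix.mul_one, Matrix.mul_one,
        Matrix.fromRows_fromCols_eq_fromBlocks, Matrix.fromBlocks_add]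
      simp
    rw [hblk]
  have hTE2 : (fromBlocks (fromBlocks G' 0 Y2 0) (fromRows 0 1) (fromCols 0 1)
      (0 : Matrix (Fin m1) (Fin p2) (RatFunc F)) :
        Matrix ((Fin n2 ⊕ Fin p2) ⊕ Fin m1) ((Fin n1 ⊕ Fin m1) ⊕ Fin p2) (RatFunc F)) * E2 = D0 := by
    rw [hE2, Matrix.fromBlocks_multiply]
    simp only [Matrix.one_mul, Matrix.mul_one, Matrix.zero_mul, Matrix.mul_zero, add_zero,
      zero_add]
    rw [hD0def]
    have hblk : fromBlocks G' (0 : Matrix (Fin n2) (Fin m1) (RatFunc F)) Y2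
          (0 : Matrix (Fin p2) (Fin m1) (RatFunc F)) +
          fromRows (0 : Matrix (Fin n2) (Fin p2) (RatFunc F)) 1 *
            fromCols (-Y2) (0 : Matrix (Fin p2) (Fin m1) (RatFunc F)) =
        fromBlocks G' 0 0 0 := by
      rw [Matrix.fromRows_mul, Matrix.one_mul, Matrix.zero_mul,
        show (0 : Matrix (Fin n2) (Fin n1 ⊕ Fin m1) (RatFunc F)) =
          fromCols 0 0 from Matrix.fromCols_zero.symm,
        Matrix.fromRows_fromCols_eq_fromBlocks, Matrix.fromBlocks_add]
      simp
    rw [hblk]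
  have hBig : E1 * A * Xp * (B * E2) = D0 := by
    have hassoc : E1 * A * Xp * (B * E2) = E1 * (A * Xp * B) * E2 := by
      rw [Matrix.mul_assoc E1 A Xp, ← Matrix.mul_assoc (E1 * (A * Xp)) B E2,
        Matrix.mul_assoc E1 (A * Xp) B, Matrix.mul_assoc A Xp B]
    rw [hassoc, hAXB, hE1T, hTE2]
  -- identification of D0 with a submatrix of the target block matrix
  have hD0sub : D0 = (fromBlocks G' 0 0
      (1 : Matrix (Fin (m1 + p2)) (Fin (m1 + p2)) (RatFunc F))).submatrix ⇑σ0eq ⇑τ0eq := by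
    ext i j
    rcases i with (a | b) | c <;> rcases j with (a' | b') | c' <;>
      simp only [hD0def, hσ0, hτ0, Matrix.submatrix_apply, Equiv.trans_apply,
        Equiv.sumAssoc_apply_inl_inl, Equiv.sumAssoc_apply_inl_inr, Equiv.sumAssoc_apply_inr,
        Equiv.sumCongr_apply, Equiv.refl_apply, Sum.map_inl, Sum.map_inr,
        Equiv.sumComm_apply, Sum.swap_inl, Sum.swap_inr, finSumFinEquiv_apply_left,
        finSumFinEquiv_apply_right, Matrix.fromBlocks_apply₁₁, Matrix.fromBlocks_apply₁₂,
        Matrix.fromBlocks_apply₂₁, Matrix.fromBlocks_apply₂₂, Matrix.fromRows_apply_inl,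
        Matrix.fromRows_apply_inr, Matrix.fromCols_apply_inl, Matrix.fromCols_apply_inr,
        Matrix.zero_apply, Equiv.coe_refl, id_eq]
    all_goals try rfl
    · rw [Matrix.one_apply_ne (by
        intro hh
        have h1 := congrArg Fin.val hh
        simp at h1
        have h2 := b'.isLt
        omega)]
    · by_cases hbc : b = c'
      · subst hbc
        rw [Matrix.one_apply_eq, Matrix.one_apply_eq]
      · rw [Matrix.one_apply_ne hbc, Matrix.one_apply_ne (by
          intro hh
          apply hbc
          have h1 := congrArg Fin.val hh
          simp at h1
          exact Fin.ext h1)]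
    · by_cases hbc : c = b'
      · subst hbc
        rw [Matrix.one_apply_eq, Matrix.one_apply_eq]
      · rw [Matrix.one_apply_ne hbc, Matrix.one_apply_ne (by
          intro hh
          apply hbc
          have h1 := congrArg Fin.val hh
          simp at h1
          exact Fin.ext h1)]
    · rw [Matrix.one_apply_ne (by
        intro hh
        have h1 := congrArg Fin.val hh
        simp at h1
        have h2 := c.isLt
        omega)]
  -- definedness facts
  have hX2def : DefinedAt X2 (0 : F) := definedAt_mul (definedAt_mul hN2.1 hM'def) hR1def
  have hY2def : DefinedAt Y2 (0 : F) :=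
    definedAt_mul (definedAt_mul (definedAt_transpose hR2def) hM'def) (definedAt_transpose hN1.1)
  have hZ2def : DefinedAt Z2 (0 : F) :=
    definedAt_mul (definedAt_mul (definedAt_transpose hR2def) hM'def) hR1def
  have hE1def : DefinedAt E1 (0 : F) := by
    rw [hE1]
    exact definedAt_fromBlocks definedAt_one
      (definedAt_fromRows (definedAt_neg hX2def) (definedAt_neg hZ2def))
      definedAt_zero definedAt_one
  have hE2def : DefinedAt E2 (0 : F) := by
    rw [hE2]
    exact definedAt_fromBlocks definedAt_one definedAt_zero
      (definedAt_fromColumns (definedAt_neg hY2def) definedAt_zero) definedAt_one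
  have hAdef : DefinedAt A (0 : F) := by
    rw [hA, hW]
    exact definedAt_fromBlocks (definedAt_fromRows hN2.1 (definedAt_transpose hR2def))
      definedAt_zero definedAt_zero definedAt_one
  have hBdef : DefinedAt B (0 : F) := by
    rw [hB, hV]
    exact definedAt_fromBlocks (definedAt_fromColumns (definedAt_transpose hN1.1) hR1def)
      definedAt_zero definedAt_zero definedAt_one
  -- regularity of the elementary factors
  have hRegE1 : RegularAt (E1.submatrix ⇑er ⇑er) (0 : F) := by
    refine ⟨definedAt_submatrix hE1def _ _, ?_⟩
    rw [matEval_submatrix, Matrix.det_submatrix_equiv_self, hE1, matEval_fromBlocks]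
    rw [matEval_zero, Matrix.det_fromBlocks_zero₂₁, matEval_one, matEval_one,
      Matrix.det_one, Matrix.det_one, mul_one]
    exact isUnit_one
  have hRegE2 : RegularAt (E2.submatrix ⇑ec ⇑ec) (0 : F) := by
    refine ⟨definedAt_submatrix hE2def _ _, ?_⟩
    rw [matEval_submatrix, Matrix.det_submatrix_equiv_self, hE2, matEval_fromBlocks]
    rw [matEval_zero, Matrix.det_fromBlocks_zero₁₂, matEval_one, matEval_one,
      Matrix.det_one, Matrix.det_one, mul_one]
    exact isUnit_one
  -- regularity of the (reindexed) basis-completion factors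
  have hRegA : RegularAt (A.submatrix ⇑er id) (0 : F) := by
    refine ⟨definedAt_submatrix hAdef _ _, ?_⟩
    rw [matEval_submatrix, isUnit_iff_ne_zero, Ne, ← Matrix.det_transpose,
      ← Matrix.exists_mulVec_eq_zero_iff]
    rintro ⟨v, hv0, hmul⟩
    rw [Matrix.transpose_submatrix, Matrix.submatrix_mulVec_equiv] at hmul
    set u := v ∘ ⇑er.symm with hu
    have hu0 : (matEval A (0 : F))ᵀ *ᵥ u = 0 := by
      funext i
      exact congrFun hmul i
    have hAT : (matEval A (0 : F))ᵀ = fromBlocks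
        (fromCols (matEval N2' 0)ᵀ (matEval R2 0)) 0 0 1 := by
      rw [hA, hW, matEval_fromBlocks, matEval_fromRows, matEval_zero, matEval_zero,
        matEval_one, Matrix.fromBlocks_transpose, Matrix.transpose_fromRows,
        Matrix.transpose_zero, Matrix.transpose_zero, Matrix.transpose_one,
        matEval_transpose, Matrix.transpose_transpose]
    rw [hAT, Matrix.fromBlocks_mulVec] at hu0
    have hbot : (0 : Matrix (Fin m1) (Fin n2 ⊕ Fin p2) F) *ᵥ (u ∘ Sum.inl) +
        (1 : Matrix (Fin m1) (Fin m1) F) *ᵥ (u ∘ Sum.inr) = 0 := by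
      funext i
      exact congrFun hu0 (Sum.inr i)
    rw [Matrix.zero_mulVec, Matrix.one_mulVec, zero_add] at hbot
    have htop : (fromCols (matEval N2' (0:F))ᵀ (matEval R2 0)) *ᵥ (u ∘ Sum.inl) +
        (0 : Matrix (Fin phat) (Fin m1) F) *ᵥ (u ∘ Sum.inr) = 0 := by
      funext i
      exact congrFun hu0 (Sum.inl i)
    rw [Matrix.zero_mulVec, add_zero] at htop
    have hwdec : u ∘ Sum.inl = Sum.elim ((u ∘ Sum.inl) ∘ Sum.inl) ((u ∘ Sum.inl) ∘ Sum.inr) := by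
      funext z
      rcases z with i | i <;> rfl
    rw [hwdec, Matrix.fromCols_mulVec_sumElim] at htop
    obtain ⟨hx0, hy0⟩ := colBlock_inj hK2.1 hN2.1 hR2def hN2.2 hd2 hK2R2e _ _ htop
    apply hv0
    have hu00 : u = 0 := by
      funext z
      rcases z with (z | z) | z
      · exact congrFun hx0 z
      · exact congrFun hy0 z
      · exact congrFun hbot z
    funext i
    have : v i = u (er i) := by rw [hu]; simp
    rw [this, hu00]
    rfl
  have hRegB : RegularAt (B.submatrix id ⇑ec) (0 : F) := by
    refine ⟨definedAt_submatrix hBdef _ _, ?_⟩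
    rw [matEval_submatrix, isUnit_iff_ne_zero, Ne, ← Matrix.exists_mulVec_eq_zero_iff]
    rintro ⟨v, hv0, hmul⟩
    rw [Matrix.submatrix_mulVec_equiv] at hmul
    set u := v ∘ ⇑ec.symm with hu
    have hu0 : matEval B (0 : F) *ᵥ u = 0 := by
      funext i
      exact congrFun hmul i
    have hBeval : matEval B (0 : F) = fromBlocks
        (fromCols (matEval N1' 0)ᵀ (matEval R1 0)) 0 0 1 := by
      rw [hB, hV, matEval_fromBlocks, matEval_fromColumns, matEval_zero, matEval_zero,
        matEval_one, matEval_transpose]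
    rw [hBeval, Matrix.fromBlocks_mulVec] at hu0
    have hbot : (0 : Matrix (Fin p2) (Fin n1 ⊕ Fin m1) F) *ᵥ (u ∘ Sum.inl) +
        (1 : Matrix (Fin p2) (Fin p2) F) *ᵥ (u ∘ Sum.inr) = 0 := by
      funext i
      exact congrFun hu0 (Sum.inr i)
    rw [Matrix.zero_mulVec, Matrix.one_mulVec, zero_add] at hbot
    have htop : (fromCols (matEval N1' (0:F))ᵀ (matEval R1 0)) *ᵥ (u ∘ Sum.inl) +
        (0 : Matrix (Fin mhat) (Fin p2) F) *ᵥ (u ∘ Sum.inr) = 0 := by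
      funext i
      exact congrFun hu0 (Sum.inl i)
    rw [Matrix.zero_mulVec, add_zero] at htop
    have hwdec : u ∘ Sum.inl = Sum.elim ((u ∘ Sum.inl) ∘ Sum.inl) ((u ∘ Sum.inl) ∘ Sum.inr) := by
      funext z
      rcases z with i | i <;> rfl
    rw [hwdec, Matrix.fromCols_mulVec_sumElim] at htop
    obtain ⟨hx0, hy0⟩ := colBlock_inj hK1.1 hN1.1 hR1def hN1.2 hd1 hK1R1e _ _ htop
    apply hv0
    have hu00 : u = 0 := by
      funext z
      rcases z with (z | z) | z
      · exact congrFun hx0 z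
      · exact congrFun hy0 z
      · exact congrFun hbot z
    funext i
    have : v i = u (ec i) := by rw [hu]; simp
    rw [this, hu00]
    rfl
  -- assemble
  refine ⟨(E1 * A).submatrix ⇑er id, (B * E2).submatrix id ⇑ec, ?_, ?_, ?_⟩
  · rw [show (E1 * A).submatrix ⇑er id = (E1.submatrix ⇑er ⇑er) * (A.submatrix ⇑er id) from
      (Matrix.submatrix_mul_equiv E1 A ⇑er er id).symm]
    exact regularAt_mul hRegE1 hRegA
  · rw [show (B * E2).submatrix id ⇑ec = (B.submatrix id ⇑ec) * (E2.submatrix ⇑ec ⇑ec) from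
      (Matrix.submatrix_mul_equiv B E2 id ec ⇑ec).symm]
    exact regularAt_mul hRegB hRegE2
  · have h1 : ((E1 * A).submatrix ⇑er id) * Xp = ((E1 * A) * Xp).submatrix ⇑er id := by
      have h := Matrix.submatrix_mul_equiv (E1 * A) Xp ⇑er
        (Equiv.refl (Fin phat ⊕ Fin m1)) (id : (Fin mhat ⊕ Fin p2) → (Fin mhat ⊕ Fin p2))
      simpa using h
    have h2 : (((E1 * A) * Xp).submatrix ⇑er id) * ((B * E2).submatrix id ⇑ec) =
        (((E1 * A) * Xp) * (B * E2)).submatrix ⇑er ⇑ec := by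
      have h := Matrix.submatrix_mul_equiv ((E1 * A) * Xp) (B * E2) ⇑er
        (Equiv.refl (Fin mhat ⊕ Fin p2)) ⇑ec
      simpa using h
    rw [h1, h2, hBig, hD0sub, Matrix.submatrix_submatrix]
    ext i j
    simp [her, hec]

end RM

/-- Let `L = [[M, K₂ᵀ], [K₁, 0]]` be a block full rank pencil of degree `1`
and let `N₁`, `N₂` be rational bases dual to `K₁`, `K₂`. If for `i = 1, 2` the pencil
`rev₁ Kᵢ = λ Kᵢ(1/λ)` has full row rank at `0` and there are integers `tᵢ` such that
`rev_{tᵢ} Nᵢ` has full row rank at `0`, then `rev L = λ L(1/λ)` is equivalent at `0` to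
`diag(rev_{1+t₁+t₂} G, I_{m₁+p₂})`, where `G = N₂ M N₁ᵀ`; i.e. `L` is a linearization with
empty state matrix of `G` at `∞` of grade `1 + t₁ + t₂`. -/
theorem blockFullRankPencil_isLinearizationAtInf {F : Type*} [Field F] [IsAlgClosed F]
    {phat mhat m1 p2 n1 n2 : ℕ}
    (M : Matrix (Fin phat) (Fin mhat) (Polynomial F))
    (K1 : Matrix (Fin m1) (Fin mhat) (Polynomial F))
    (K2 : Matrix (Fin p2) (Fin phat) (Polynomial F))
    (hdeg : RM.matDeg (Matrix.fromBlocks M K2.transpose K1 0) = 1)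
    (hK1rk : (RM.toRat K1).rank = m1) (hK2rk : (RM.toRat K2).rank = p2)
    (N1 : Matrix (Fin n1) (Fin mhat) (RatFunc F))
    (N2 : Matrix (Fin n2) (Fin phat) (RatFunc F))
    (hn1 : m1 + n1 = mhat) (hn2 : p2 + n2 = phat)
    (hN1rk : N1.rank = n1) (hN2rk : N2.rank = n2)
    (hdual1 : RM.toRat K1 * N1.transpose = 0) (hdual2 : RM.toRat K2 * N2.transpose = 0)
    (hK1rev : RM.FullRowRankAt (RM.toRat (RM.polyRev 1 K1)) (0 : F))
    (hK2rev : RM.FullRowRankAt (RM.toRat (RM.polyRev 1 K2)) (0 : F))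
    (t1 t2 : ℤ)
    (hN1rev : RM.FullRowRankAt (RM.matRev t1 N1) (0 : F))
    (hN2rev : RM.FullRowRankAt (RM.matRev t2 N2) (0 : F)) :
    RM.EquivAt
      (Matrix.reindex (finCongr (by omega : phat + m1 = n2 + (m1 + p2)))
        (finCongr (by omega : mhat + p2 = n1 + (m1 + p2)))
        (Matrix.reindex finSumFinEquiv finSumFinEquiv
          (RM.toRat (RM.polyRev 1 (Matrix.fromBlocks M K2.transpose K1 0)))))
      (RM.diagPad (RM.matRev (1 + t1 + t2) (N2 * RM.toRat M * N1.transpose)) (m1 + p2))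
      (0 : F) := by
  classical
  -- degree bounds on the blocks
  have hent : ∀ (i : Fin phat ⊕ Fin m1) (j : Fin mhat ⊕ Fin p2),
      ((Matrix.fromBlocks M K2.transpose K1 0) i j).natDegree ≤ 1 := by
    intro i j
    rw [← hdeg, RM.matDeg]
    exact Finset.le_sup (f := fun p : (Fin phat ⊕ Fin m1) × (Fin mhat ⊕ Fin p2) =>
      ((Matrix.fromBlocks M K2.transpose K1 0) p.1 p.2).natDegree) (Finset.mem_univ (i, j))
  have hMdeg : ∀ i j, (M i j).natDegree ≤ 1 := fun i j => hent (Sum.inl i) (Sum.inl j)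
  have hK1deg : ∀ i j, (K1 i j).natDegree ≤ 1 := fun i j => hent (Sum.inr i) (Sum.inl j)
  have hK2deg : ∀ i j, (K2 i j).natDegree ≤ 1 := fun i j => hent (Sum.inl j) (Sum.inr i)
  -- the reversed matrices
  set M' : Matrix (Fin phat) (Fin mhat) (RatFunc F) := RM.toRat (RM.polyRev 1 M) with hM'
  set K1' : Matrix (Fin m1) (Fin mhat) (RatFunc F) := RM.toRat (RM.polyRev 1 K1) with hK1'
  set K2' : Matrix (Fin p2) (Fin phat) (RatFunc F) := RM.toRat (RM.polyRev 1 K2) with hK2'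
  set N1' : Matrix (Fin n1) (Fin mhat) (RatFunc F) := RM.matRev t1 N1 with hN1'
  set N2' : Matrix (Fin n2) (Fin phat) (RatFunc F) := RM.matRev t2 N2 with hN2'
  have hM'rev : M' = RM.matRev (1 : ℤ) (RM.toRat M) := by
    rw [hM', RM.toRat_polyRev hMdeg]
    norm_num
  have hK1'rev : K1' = RM.matRev (1 : ℤ) (RM.toRat K1) := by
    rw [hK1', RM.toRat_polyRev hK1deg]
    norm_num
  have hK2'rev : K2' = RM.matRev (1 : ℤ) (RM.toRat K2) := by
    rw [hK2', RM.toRat_polyRev hK2deg]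
    norm_num
  -- duality for the reversed matrices
  have hd1 : K1' * N1'ᵀ = 0 := by
    rw [hK1'rev, hN1', RM.matRev_transpose, RM.matRev_mul, hdual1, RM.matRev_zero]
  have hd2 : K2' * N2'ᵀ = 0 := by
    rw [hK2'rev, hN2', RM.matRev_transpose, RM.matRev_mul, hdual2, RM.matRev_zero]
  -- the reversal of the transfer function
  have hGrev : RM.matRev (1 + t1 + t2) (N2 * RM.toRat M * N1.transpose) = N2' * M' * N1'ᵀ := by
    rw [hN2', hM'rev, hN1', RM.matRev_transpose, RM.matRev_mul, RM.matRev_mul,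
      show (t2 + 1 + t1 : ℤ) = 1 + t1 + t2 by ring]
  -- definedness of the reversed middle block
  have hM'def : RM.DefinedAt M' (0 : F) := fun i j => RM.rdef_algebraMap _ 0
  -- index bookkeeping
  have h1 : phat + m1 = n2 + (m1 + p2) := by omega
  have h2 : mhat + p2 = n1 + (m1 + p2) := by omega
  have hcore := RM.core_blockEquiv M' K1' K2' N1' N2' hM'def hK1rev hK2rev hN1rev hN2rev hd1 hd2
    ((finSumFinEquiv.trans (finCongr h1)).trans finSumFinEquiv.symm)
    ((finSumFinEquiv.trans (finCongr h2)).trans finSumFinEquiv.symm)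
  have hfinal := RM.equivAt_submatrix ((finCongr h1).symm.trans finSumFinEquiv.symm)
    ((finCongr h2).symm.trans finSumFinEquiv.symm) hcore
  have hXpblocks : RM.toRat (RM.polyRev 1 (Matrix.fromBlocks M K2.transpose K1 0)) =
      Matrix.fromBlocks M' K2'ᵀ K1' 0 := by
    ext i j
    rcases i with i | i <;> rcases j with j | j <;>
      simp [hM', hK1', hK2', RM.toRat, RM.polyRev, Polynomial.reflect_zero]
  have hL : (Matrix.fromBlocks M' K2'ᵀ K1' 0).submatrix
        ⇑((finCongr h1).symm.trans finSumFinEquiv.symm)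
        ⇑((finCongr h2).symm.trans finSumFinEquiv.symm) =
      Matrix.reindex (finCongr h1) (finCongr h2)
        (Matrix.reindex finSumFinEquiv finSumFinEquiv
          (RM.toRat (RM.polyRev 1 (Matrix.fromBlocks M K2.transpose K1 0)))) := by
    rw [hXpblocks]
    ext i j
    simp [Matrix.reindex_apply]
  have hR : ((Matrix.fromBlocks (N2' * M' * N1'ᵀ) 0 0
        (1 : Matrix (Fin (m1 + p2)) (Fin (m1 + p2)) (RatFunc F))).submatrix
          ⇑((finSumFinEquiv.trans (finCongr h1)).trans finSumFinEquiv.symm)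
          ⇑((finSumFinEquiv.trans (finCongr h2)).trans finSumFinEquiv.symm)).submatrix
        ⇑((finCongr h1).symm.trans finSumFinEquiv.symm)
        ⇑((finCongr h2).symm.trans finSumFinEquiv.symm) =
      RM.diagPad (RM.matRev (1 + t1 + t2) (N2 * RM.toRat M * N1.transpose)) (m1 + p2) := by
    rw [hGrev, RM.diagPad]
    ext i j
    simp [Matrix.reindex_apply]
  rw [hL, hR] at hfinal
  exact hfinal
end
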